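/- arXiv:2301.01540 — 8 statements merged into one kernel-verified Lean document; each statement's English description precedes it below -/
import Mathlib

section
/- Let ℓ be a positive even integer and let λ₁, …, λ_ℓ be nonzero real numbers. Define B(ℓ, λ_{1:ℓ}) = (1/ℓ!) Σ_{p ∈ Sym(ℓ)} Σ_{m,n even ≥ 0, m+n = ℓ} [(m/2)! (n/2)!]^{-1} (−1)^{n/2} Π_{k=ℓ−n+1}^{ℓ} sgn(λ_{p(k)}). Let N be the number of indices k with λ_k < 0. Then B(ℓ, λ_{1:ℓ}) = 2^ℓ · (ℓ/2)! / ℓ! if N = ℓ/2, and B(ℓ, λ_{1:ℓ}) = 0 if N ≠ ℓ/2. -/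
open Finset Equiv Polynomial

set_option linter.unusedSectionVars false

section PermCount

variable {α : Type*} [Fintype α] [DecidableEq α]

lemma image_eq_self_iff (S : Finset α) (g : Perm α) :
    S.image g = S ↔ ∀ a, (g a ∈ S) = (a ∈ S) := by
  constructor
  · intro h a
    by_cases ha : a ∈ S
    · rw [eq_iff_iff]; simp only [ha, iff_true]
      rw [← h]; exact Finset.mem_image_of_mem _ ha
    · simp only [ha, eq_iff_iff, iff_false]
      intro hga
      rw [← h, Finset.mem_image] at hga
      obtain ⟨b, hb, hba⟩ := hga
      exact ha (g.injective hba ▸ hb)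
  · intro h
    apply Finset.eq_of_subset_of_card_le
    · intro x hx
      rw [Finset.mem_image] at hx
      obtain ⟨b, hb, rfl⟩ := hx
      rw [h b]; exact hb
    · rw [Finset.card_image_of_injective _ g.injective]

lemma stab_card (S : Finset α) :
    (univ.filter fun p : Perm α => S.image p = S).card
      = Nat.factorial S.card * Nat.factorial Sᶜ.card := by
  classical
  have h := DomMulAct.stabilizer_card (fun a => (a ∈ S : Bool))
  rw [Fintype.card_subtype] at h
  have e1 : (univ.filter fun p : Perm α => S.image p = S)
      = (univ.filter fun g : Perm α => (fun a => (a ∈ S : Bool)) ∘ g = (fun a => (a ∈ S : Bool))) := by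
    apply Finset.filter_congr
    intro p _
    rw [image_eq_self_iff]
    constructor
    · intro hp; funext a; simp [hp a]
    · intro hp a
      have := congrFun hp a
      simpa using this
  rw [e1, h, Fintype.prod_bool]
  congr 1
  · congr 1; rw [← Fintype.card_coe S]; apply Fintype.card_congr
    exact Equiv.subtypeEquivRight (by simp)
  · congr 1; rw [← Fintype.card_coe Sᶜ]; apply Fintype.card_congr
    exact Equiv.subtypeEquivRight (by simp)

lemma exists_perm_image (S T : Finset α) (h : S.card = T.card) :
    ∃ σ : Perm α, S.image σ = T := by
  classical
  let e : {x // x ∈ S} ≃ {x // x ∈ T} := Finset.equivOfCardEq h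
  refine ⟨e.extendSubtype, ?_⟩
  apply Finset.eq_of_subset_of_card_le
  · intro x hx
    rw [Finset.mem_image] at hx
    obtain ⟨a, ha, rfl⟩ := hx
    exact e.extendSubtype_mem a ha
  · rw [Finset.card_image_of_injective _ (Equiv.injective _), h]

lemma image_image_inv (σ : Perm α) (X : Finset α) :
    Finset.image (⇑(σ⁻¹)) (Finset.image (⇑σ) X) = X := by
  rw [Finset.image_image]
  have : ⇑σ⁻¹ ∘ ⇑σ = id := by funext a; simp
  rw [this, Finset.image_id]

lemma fiber_card (S T : Finset α) (h : S.card = T.card) :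
    (univ.filter fun p : Perm α => S.image p = T).card
      = Nat.factorial S.card * Nat.factorial Sᶜ.card := by
  classical
  obtain ⟨σ, hσ⟩ := exists_perm_image S T h
  rw [← stab_card S]
  refine Finset.card_bij' (fun p _ => σ⁻¹ * p) (fun q _ => σ * q) ?_ ?_ ?_ ?_
  · intro p hp
    rw [Finset.mem_filter] at hp ⊢
    refine ⟨Finset.mem_univ _, ?_⟩
    have : ⇑(σ⁻¹ * p) = ⇑σ⁻¹ ∘ ⇑p := rfl
    rw [this, ← Finset.image_image, hp.2, ← hσ, image_image_inv]
  · intro q hq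
    rw [Finset.mem_filter] at hq ⊢
    refine ⟨Finset.mem_univ _, ?_⟩
    have : ⇑(σ * q) = ⇑σ ∘ ⇑q := rfl
    rw [this, ← Finset.image_image, hq.2, hσ]
  · intro p _; group
  · intro q _; group

lemma sum_perm_prod (S : Finset α) (ε : α → ℝ) :
    ∑ p : Perm α, ∏ k ∈ S, ε (p k)
      = (Nat.factorial S.card) * (Nat.factorial Sᶜ.card) *
        ∑ T ∈ powersetCard S.card (univ : Finset α), ∏ t ∈ T, ε t := by
  classical
  have h1 : ∀ p : Perm α, ∏ k ∈ S, ε (p k) = ∏ t ∈ S.image p, ε t := by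
    intro p
    rw [Finset.prod_image (fun a _ b _ h => p.injective h)]
  simp_rw [h1]
  rw [← Finset.sum_fiberwise_of_maps_to (g := fun p : Perm α => S.image ⇑p)
    (t := powersetCard S.card (univ : Finset α))
    (fun p _ => by
      rw [Finset.mem_powersetCard_univ, Finset.card_image_of_injective _ p.injective])]
  rw [Finset.mul_sum]
  apply Finset.sum_congr rfl
  intro T hT
  rw [Finset.mem_powersetCard_univ] at hT
  have : ∀ p ∈ univ.filter (fun p : Perm α => S.image ⇑p = T),
      ∏ t ∈ S.image ⇑p, ε t = ∏ t ∈ T, ε t := by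
    intro p hp
    rw [Finset.mem_filter] at hp
    rw [hp.2]
  rw [Finset.sum_congr rfl this, Finset.sum_const, fiber_card S T hT.symm,
    nsmul_eq_mul]
  push_cast
  ring

open Polynomial in
lemma sum_powersetCard_prod (ε : α → ℝ) (hε : ∀ k, ε k = -1 ∨ ε k = 1) (n : ℕ) :
    ∑ T ∈ powersetCard n (univ : Finset α), ∏ t ∈ T, ε t
      = ((1 + X) ^ (univ.filter fun k => ε k = 1).card *
          (1 - X) ^ (univ.filter fun k => ε k = -1).card : ℝ[X]).coeff n := by
  classical
  have key : (∏ k : α, (C (ε k) * X + 1) : ℝ[X])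
      = (1 + X) ^ (univ.filter fun k => ε k = 1).card *
          (1 - X) ^ (univ.filter fun k => ε k = -1).card := by
    rw [← Finset.prod_filter_mul_prod_filter_not (univ : Finset α) (fun k => ε k = 1)]
    congr 1
    · rw [Finset.prod_congr rfl (fun k hk => ?_), Finset.prod_const]
      rw [Finset.mem_filter] at hk
      rw [hk.2, map_one]; ring
    · rw [Finset.prod_congr rfl (fun k hk => ?_), Finset.prod_const]
      · congr 2
        apply Finset.filter_congr
        intro k _
        rcases hε k with h | h <;> simp [h] <;> norm_num
      · rw [Finset.mem_filter] at hk
        rcases hε k with h | h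
        · rw [h]; simp; ring
        · exact absurd h hk.2
  rw [← key, Finset.prod_add]
  rw [Polynomial.finset_sum_coeff]
  have h2 : ∀ t ∈ (univ : Finset α).powerset,
      ((∏ i ∈ t, C (ε i) * X) * ∏ i ∈ univ \ t, (1:ℝ[X])).coeff n
        = if t.card = n then ∏ i ∈ t, ε i else 0 := by
    intro t _
    rw [Finset.prod_const_one, mul_one, Finset.prod_mul_distrib, Finset.prod_const,
      ← map_prod, Polynomial.coeff_C_mul, Polynomial.coeff_X_pow]
    by_cases h : t.card = n
    · simp [h]
    · simp [h, Ne.symm h]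
  rw [Finset.sum_congr rfl h2, ← Finset.sum_filter, Finset.powersetCard_eq_filter]

end PermCount

lemma coeff_one_sub_pow (N k : ℕ) :
    ((1 - X : ℝ[X]) ^ N).coeff k = (-1:ℝ)^k * N.choose k := by
  have h : (1 - X : ℝ[X]) ^ N = ∑ i ∈ range (N+1), C ((-1:ℝ)^i * N.choose i) * X ^ i := by
    have h0 : (1 - X : ℝ[X]) = -X + 1 := by ring
    rw [h0, add_pow]
    apply Finset.sum_congr rfl
    intro i _
    rw [one_pow, mul_one, neg_pow]
    rw [map_mul]
    have : (C ((-1:ℝ)^i) : ℝ[X]) = (-1)^i := by rw [map_pow, map_neg, map_one]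
    rw [this]
    have : (C ((N.choose i : ℝ)) : ℝ[X]) = (N.choose i : ℝ[X]) := by
      rw [Polynomial.C_eq_natCast]
    rw [this]
    ring
  rw [h, Polynomial.finset_sum_coeff]
  simp_rw [Polynomial.coeff_C_mul, Polynomial.coeff_X_pow]
  rw [Finset.sum_eq_single k]
  · by_cases hk : k ≤ N
    · simp
    · push_neg at hk
      rw [Nat.choose_eq_zero_of_lt hk]
      simp
  · intro b _ hb
    simp [Ne.symm hb]
  · intro hk
    rw [Finset.mem_range, not_lt] at hk
    rw [Nat.choose_eq_zero_of_lt hk]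
    simp

noncomputable def dd (j : ℕ) : ℝ := (Nat.factorial (2*j) : ℝ) / (Nat.factorial j : ℝ)

lemma fact_ne (n : ℕ) : (Nat.factorial n : ℝ) ≠ 0 :=
  Nat.cast_ne_zero.mpr (Nat.factorial_ne_zero n)

lemma dd_succ (m : ℕ) : dd (m+1) = (2*(2*(m:ℝ)+1)) * dd m := by
  unfold dd
  have h1 : 2*(m+1) = (2*m+1)+1 := by ring
  rw [h1, Nat.factorial_succ, Nat.factorial_succ, Nat.factorial_succ]
  have h2 := fact_ne m
  have h3 := fact_ne (2*m)
  have h4 : ((m:ℝ)+1) ≠ 0 := by positivity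
  push_cast
  field_simp
  ring

noncomputable def GG (P N L : ℕ) : ℝ :=
  ∑ j ∈ range (L+1), (-1:ℝ)^j * dd j * dd (L-j) *
    (((1+X)^P * (1-X)^N : ℝ[X]).coeff (2*j))

lemma dd_choose (L j : ℕ) (hj : j ≤ L) :
    dd j * dd (L-j) * ((2*L).choose (2*j) : ℝ)
      = ((Nat.factorial (2*L) : ℝ) / (Nat.factorial L : ℝ)) * (L.choose j : ℝ) := by
  unfold dd
  rw [Nat.cast_choose ℝ (by omega : 2*j ≤ 2*L), Nat.cast_choose ℝ hj]
  have h : 2*L - 2*j = 2*(L-j) := by omega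
  rw [h]
  have := fact_ne j; have := fact_ne (L-j); have := fact_ne (2*j)
  have := fact_ne (2*(L-j)); have := fact_ne L; have := fact_ne (2*L)
  field_simp

lemma alt_sum (L : ℕ) :
    ∑ m ∈ range (L+1), ((-1:ℝ))^m * (L.choose m) = if L = 0 then 1 else 0 := by
  have := Int.alternating_sum_range_choose (n := L)
  have h2 : ((∑ m ∈ range (L+1), ((-1:ℤ))^m * (L.choose m) : ℤ) : ℝ)
      = ((if L = 0 then (1:ℤ) else 0 : ℤ) : ℝ) := by rw [this]
  push_cast at h2
  split_ifs at h2 with h <;> simp_all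

lemma GG_P0 (L : ℕ) : GG (2*L) 0 L = if L = 0 then 1 else 0 := by
  unfold GG
  simp only [pow_zero, mul_one]
  have hco : ∀ j ∈ range (L+1), (-1:ℝ)^j * dd j * dd (L-j) *
      (((1+X)^(2*L) : ℝ[X]).coeff (2*j))
      = ((Nat.factorial (2*L) : ℝ) / (Nat.factorial L : ℝ)) * ((-1:ℝ)^j * (L.choose j)) := by
    intro j hj
    rw [Finset.mem_range] at hj
    rw [coeff_one_add_X_pow, mul_assoc ((-1:ℝ)^j * dd j), mul_assoc ((-1:ℝ)^j),
      ← mul_assoc (dd j), dd_choose L j (by omega)]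
    ring
  rw [Finset.sum_congr rfl hco, ← Finset.mul_sum, alt_sum]
  by_cases hL : L = 0
  · subst hL; simp
  · simp [hL]

lemma GG_0N (L : ℕ) : GG 0 (2*L) L = if L = 0 then 1 else 0 := by
  unfold GG
  simp only [pow_zero, one_mul]
  have hco : ∀ j ∈ range (L+1), (-1:ℝ)^j * dd j * dd (L-j) *
      (((1-X)^(2*L) : ℝ[X]).coeff (2*j))
      = ((Nat.factorial (2*L) : ℝ) / (Nat.factorial L : ℝ)) * ((-1:ℝ)^j * (L.choose j)) := by
    intro j hj
    rw [Finset.mem_range] at hj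
    rw [coeff_one_sub_pow]
    have hone : ((-1:ℝ))^(2*j) = 1 := by rw [pow_mul]; norm_num
    rw [hone, one_mul, mul_assoc ((-1:ℝ)^j * dd j), mul_assoc ((-1:ℝ)^j),
      ← mul_assoc (dd j), dd_choose L j (by omega)]
    ring
  rw [Finset.sum_congr rfl hco, ← Finset.mul_sum, alt_sum]
  by_cases hL : L = 0
  · subst hL; simp
  · simp [hL]

lemma dd_comb (L j : ℕ) (hj : j ≤ L) :
    dd j * dd (L+1-j) + dd (j+1) * dd (L-j) = (4*(L:ℝ)+4) * (dd j * dd (L-j)) := by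
  have h1 : L+1-j = (L-j)+1 := by omega
  rw [h1, dd_succ, dd_succ]
  have h2 : ((L-j : ℕ) : ℝ) = (L:ℝ) - (j:ℝ) := by
    rw [Nat.cast_sub hj]
  rw [h2]
  ring

lemma GG_step (P N L : ℕ) (h : P + N ≤ 2*L + 1) :
    GG (P+1) (N+1) (L+1) = (4*(L:ℝ)+4) * GG P N L := by
  set g : ℝ[X] := (1+X)^P * (1-X)^N with hg
  have hfact : ((1+X)^(P+1) * (1-X)^(N+1) : ℝ[X]) = g - X^2 * g := by
    rw [hg]; ring
  have hdegg : g.natDegree ≤ P + N := by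
    refine le_trans (natDegree_mul_le) (add_le_add ?_ ?_)
    · refine le_trans (natDegree_pow_le) ?_
      have : (1+X : ℝ[X]).natDegree ≤ 1 := by
        refine le_trans (natDegree_add_le _ _) ?_
        simp
      calc P * (1+X : ℝ[X]).natDegree ≤ P * 1 := Nat.mul_le_mul_left P this
        _ = P := by ring
    · refine le_trans (natDegree_pow_le) ?_
      have : (1-X : ℝ[X]).natDegree ≤ 1 := by
        refine le_trans (natDegree_sub_le _ _) ?_
        simp
      calc N * (1-X : ℝ[X]).natDegree ≤ N * 1 := Nat.mul_le_mul_left N this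
        _ = N := by ring
  have hzero : g.coeff (2*(L+1)) = 0 :=
    coeff_eq_zero_of_natDegree_lt (by omega)
  unfold GG
  rw [hfact]
  simp_rw [Polynomial.coeff_sub, mul_sub]
  rw [Finset.sum_sub_distrib]
  have e1 : ∑ j ∈ range (L+1+1), (-1:ℝ)^j * dd j * dd (L+1-j) * g.coeff (2*j)
      = ∑ j ∈ range (L+1), (-1:ℝ)^j * dd j * dd (L+1-j) * g.coeff (2*j) := by
    rw [Finset.sum_range_succ, hzero]
    simp
  have e2 : ∑ j ∈ range (L+1+1), (-1:ℝ)^j * dd j * dd (L+1-j) * (X^2*g).coeff (2*j)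
      = ∑ j ∈ range (L+1), (-1:ℝ)^(j+1) * dd (j+1) * dd (L-j) * g.coeff (2*j) := by
    rw [Finset.sum_range_succ']
    have hz0 : ((X^2*g : ℝ[X]).coeff (2*0)) = 0 := by
      rw [mul_comm, Polynomial.coeff_mul_X_pow']
      simp
    rw [hz0]
    simp only [mul_zero, add_zero]
    apply Finset.sum_congr rfl
    intro j hj
    have hc : ((X^2*g : ℝ[X]).coeff (2*(j+1))) = g.coeff (2*j) := by
      have : 2*(j+1) = 2*j + 2 := by ring
      rw [this, Polynomial.coeff_X_pow_mul]
    have h9 : L+1-(j+1) = L-j := by omega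
    rw [hc, h9]
  rw [e1, e2, Finset.mul_sum, ← Finset.sum_sub_distrib]
  apply Finset.sum_congr rfl
  intro j hj
  rw [Finset.mem_range] at hj
  have hcomb := dd_comb L j (by omega)
  have : (-1:ℝ)^(j+1) = -((-1:ℝ)^j) := by rw [pow_succ]; ring
  rw [this]
  linear_combination ((-1:ℝ)^j * g.coeff (2*j)) * hcomb

lemma GG_main : ∀ L P N : ℕ, P + N = 2*L →
    GG P N L = if P = N then (4:ℝ)^L * Nat.factorial L else 0 := by
  intro L
  induction L with
  | zero =>
    intro P N h
    have hP : P = 0 := by omega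
    have hN : N = 0 := by omega
    subst hP; subst hN
    unfold GG
    simp [dd]
  | succ L ih =>
    intro P N h
    match P, N with
    | 0, N =>
      have hN : N = 2*(L+1) := by omega
      subst hN
      rw [GG_0N (L+1)]
      rw [if_neg (by omega : ¬ (0 = 2*(L+1)))]
      simp
    | P+1, 0 =>
      have hP : P+1 = 2*(L+1) := by omega
      rw [hP, GG_P0 (L+1), if_neg (by omega : ¬ (2*(L+1) = 0))]
      simp
    | P+1, N+1 =>
      have h' : P + N = 2*L := by omega
      rw [GG_step P N L (by omega), ih P N h']
      by_cases hPN : P = N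
      · subst hPN
        rw [if_pos rfl, if_pos rfl]
        rw [Nat.factorial_succ]
        push_cast
        ring
      · rw [if_neg hPN, if_neg (by omega)]
        ring


lemma card_S (ℓ n : ℕ) (hn : n ≤ ℓ) :
    ((univ : Finset (Fin ℓ)).filter fun k : Fin ℓ => ℓ - n ≤ (k:ℕ)).card = n := by
  rw [Finset.card_nbij (i := Fin.val) (t := Finset.Ico (ℓ - n) ℓ)]
  · rw [Nat.card_Ico]; omega
  · intro a ha
    rw [Finset.mem_coe, Finset.mem_filter] at ha
    rw [Finset.mem_coe, Finset.mem_Ico]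
    exact ⟨ha.2, a.2⟩
  · intro a _ b _ hab
    exact Fin.val_injective hab
  · intro m hm
    rw [Finset.coe_Ico, Set.mem_Ico] at hm
    exact ⟨⟨m, hm.2⟩, by simp; omega, rfl⟩

lemma evens_eq_image (L : ℕ) :
    ((Finset.range (2*L + 1)).filter (fun n => Even n))
      = (Finset.range (L+1)).image (fun j => 2*j) := by
  ext m
  simp only [Finset.mem_filter, Finset.mem_range, Nat.even_iff, Finset.mem_image]
  constructor
  · rintro ⟨h1, h2⟩
    exact ⟨m/2, by omega, by omega⟩
  · rintro ⟨j, hj, rfl⟩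
    omega


/-- Lemma 2 of the paper: the weighted sum of products of sign functions equals
`2^ℓ (ℓ/2)! / ℓ!` when exactly half of the `λ_k` are negative, and `0` otherwise.
Indices are 0-based: the product over `k = ℓ-n+1, …, ℓ` (1-based) becomes the product over
the last `n` indices, i.e. those `k : Fin ℓ` with `ℓ - n ≤ k`. -/
theorem stmt1 (ℓ : ℕ) (hℓ : 0 < ℓ) (hev : Even ℓ) (lam : Fin ℓ → ℝ)
    (hlam : ∀ k, lam k ≠ 0) :
    (1 / (Nat.factorial ℓ : ℝ)) *
      ∑ p : Equiv.Perm (Fin ℓ),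
        ∑ n ∈ (Finset.range (ℓ + 1)).filter (fun n => Even n),
          ((Nat.factorial ((ℓ - n) / 2) : ℝ) * (Nat.factorial (n / 2) : ℝ))⁻¹ *
            (-1) ^ (n / 2) *
            ∏ k ∈ Finset.univ.filter (fun k : Fin ℓ => ℓ - n ≤ (k : ℕ)),
              Real.sign (lam (p k)) =
      (if (Finset.univ.filter (fun k : Fin ℓ => lam k < 0)).card = ℓ / 2 then
        2 ^ ℓ * (Nat.factorial (ℓ / 2) : ℝ) / (Nat.factorial ℓ : ℝ)
      else 0) := by
  classical
  obtain ⟨L, hLev⟩ := hev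
  have hℓ2 : ℓ = 2*L := by omega
  subst hℓ2
  clear hLev
  set ε : Fin (2*L) → ℝ := fun k => Real.sign (lam k) with hεdef
  have hrw : ∀ x, Real.sign (lam x) = ε x := fun _ => rfl
  have hε : ∀ k, ε k = -1 ∨ ε k = 1 := by
    intro k
    rcases lt_trichotomy (lam k) 0 with h | h | h
    · left; exact Real.sign_of_neg h
    · exact absurd h (hlam k)
    · right; exact Real.sign_of_pos h
  have hεneg : ∀ k, ε k = -1 ↔ lam k < 0 := by
    intro k
    constructor
    · intro h
      rcases lt_trichotomy (lam k) 0 with h' | h' | h'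
      · exact h'
      · exact absurd h' (hlam k)
      · exfalso
        rw [hεdef] at h
        simp only at h
        rw [Real.sign_of_pos h'] at h
        norm_num at h
    · intro h; exact Real.sign_of_neg h
  set N := (univ.filter (fun k : Fin (2*L) => lam k < 0)).card with hN
  set Pp := (univ.filter (fun k : Fin (2*L) => ε k = 1)).card with hPp
  set Nn := (univ.filter (fun k : Fin (2*L) => ε k = -1)).card with hNn
  have hfneg : (univ.filter (fun k : Fin (2*L) => ε k = -1))
      = (univ.filter (fun k : Fin (2*L) => lam k < 0)) :=
    Finset.filter_congr (fun k _ => by rw [hεneg k])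
  have hNnN : Nn = N := by rw [hNn, hN, hfneg]
  have hPN : Pp + Nn = 2*L := by
    rw [hPp, hNn]
    have h1 := Finset.card_filter_add_card_filter_not
      (s := (univ : Finset (Fin (2*L)))) (p := fun k => ε k = 1)
    have h2 : (univ.filter (fun k : Fin (2*L) => ¬ ε k = 1))
        = (univ.filter (fun k : Fin (2*L) => ε k = -1)) :=
      Finset.filter_congr (fun k _ => by
        rcases hε k with h | h <;> simp [h] <;> norm_num)
    rw [h2] at h1
    rw [h1, Finset.card_univ, Fintype.card_fin]
  set Q : ℝ[X] := (1+X)^Pp * (1-X)^Nn with hQ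
  simp only [hrw]
  rw [Finset.sum_comm]
  have hbig : ∀ n ∈ (Finset.range (2*L + 1)).filter (fun n => Even n),
      ∑ p : Equiv.Perm (Fin (2*L)),
        ((Nat.factorial ((2*L - n) / 2) : ℝ) * (Nat.factorial (n / 2) : ℝ))⁻¹ *
          (-1) ^ (n / 2) *
          ∏ k ∈ Finset.univ.filter (fun k : Fin (2*L) => 2*L - n ≤ (k : ℕ)), ε (p k)
      = ((Nat.factorial ((2*L - n) / 2) : ℝ) * (Nat.factorial (n / 2) : ℝ))⁻¹ *
          (-1) ^ (n / 2) *
          ((Nat.factorial n : ℝ) * (Nat.factorial (2*L - n) : ℝ) * Q.coeff n) := by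
    intro n hn
    rw [Finset.mem_filter, Finset.mem_range] at hn
    have hnℓ : n ≤ 2*L := by omega
    rw [← Finset.mul_sum]
    congr 1
    set S := Finset.univ.filter (fun k : Fin (2*L) => 2*L - n ≤ (k : ℕ)) with hS
    have hcard : S.card = n := card_S (2*L) n hnℓ
    have hcardc : Sᶜ.card = 2*L - n := by
      rw [Finset.card_compl, hcard, Fintype.card_fin]
    rw [sum_perm_prod S ε, hcard, hcardc, sum_powersetCard_prod ε hε n, ← hPp, ← hNn, ← hQ]
    try push_cast
    try ring
  rw [Finset.sum_congr rfl hbig, evens_eq_image L,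
    Finset.sum_image (by intro a _ b _ h; have h' : 2*a = 2*b := h; omega)]
  have hterm : ∀ j ∈ Finset.range (L+1),
      ((Nat.factorial ((2*L - 2*j) / 2) : ℝ) * (Nat.factorial ((2*j) / 2) : ℝ))⁻¹ *
          (-1) ^ ((2*j) / 2) *
          ((Nat.factorial (2*j) : ℝ) * (Nat.factorial (2*L - 2*j) : ℝ) * Q.coeff (2*j))
      = (-1:ℝ)^j * dd j * dd (L-j) * (Q.coeff (2*j)) := by
    intro j hj
    rw [Finset.mem_range] at hj
    have e1 : (2*j)/2 = j := by omega
    have e2 : (2*L-2*j)/2 = L-j := by omega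
    have e3 : 2*L-2*j = 2*(L-j) := by omega
    rw [e1, e2, e3]
    unfold dd
    have := fact_ne j; have := fact_ne (L-j)
    field_simp
  rw [Finset.sum_congr rfl hterm]
  have hGG : ∑ j ∈ Finset.range (L+1), (-1:ℝ)^j * dd j * dd (L-j) * (Q.coeff (2*j))
      = GG Pp Nn L := rfl
  rw [hGG, GG_main L Pp Nn hPN]
  have hNle : N ≤ 2*L := by
    rw [hN]
    calc (univ.filter (fun k : Fin (2*L) => lam k < 0)).card
        ≤ (univ : Finset (Fin (2*L))).card := Finset.card_filter_le _ _
      _ = 2*L := by rw [Finset.card_univ, Fintype.card_fin]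
  have hL2 : 2*L/2 = L := by omega
  rw [hL2]
  by_cases hcase : N = L
  · rw [if_pos (by omega : Pp = Nn), if_pos hcase]
    rw [show (4:ℝ) = 2^2 by norm_num, ← pow_mul]
    have := fact_ne (2*L)
    field_simp
  · rw [if_neg (by omega : ¬ Pp = Nn), if_neg hcase]
    ring
end

section
/- Let ℓ ≥ 2 be an even integer and let h be an integer with 0 ≤ h < ℓ/2. Then Σ_{n even, 0 ≤ n ≤ ℓ−h} (−1)^{n/2} · [n! (ℓ−n)! / ((n/2)! ((ℓ−n)/2)!)] · binom(ℓ−h, n) = 0. -/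
open Finset

/-- Even Gaussian moments: `aa (2k) = (2k-1)!!`, zero at odd indices. -/
noncomputable def aa : ℕ → ℝ
  | 0 => 1
  | 1 => 0
  | (n+2) => (n+1) * aa n

/-- Signed version: `bb (2k) = (-1)^k (2k-1)!!`, zero at odd indices. -/
noncomputable def bb : ℕ → ℝ
  | 0 => 1
  | 1 => 0
  | (n+2) => -(n+1) * bb n

lemma aa_two_step (n : ℕ) : aa (n+2) = (n+1) * aa n := rfl
lemma bb_two_step (n : ℕ) : bb (n+2) = -(n+1) * bb n := rfl

lemma aa_odd (k : ℕ) : aa (2*k+1) = 0 := by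
  induction k with
  | zero => rfl
  | succ k ih =>
    have h : 2*(k+1)+1 = (2*k+1)+2 := by ring
    rw [h, aa_two_step, ih]; ring

lemma bb_odd (k : ℕ) : bb (2*k+1) = 0 := by
  induction k with
  | zero => rfl
  | succ k ih =>
    have h : 2*(k+1)+1 = (2*k+1)+2 := by ring
    rw [h, bb_two_step, ih]; ring

lemma aa_even (k : ℕ) : aa (2*k) = (2*k).factorial / (2^k * k.factorial) := by
  induction k with
  | zero => simp [aa]
  | succ k ih =>
    have h2 : 2*(k+1) = (2*k)+2 := by ring
    rw [h2, aa_two_step, ih]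
    have hf : ((2*k)+2).factorial = ((2*k)+2) * (((2*k)+1) * (2*k).factorial) := by
      rw [Nat.factorial_succ, Nat.factorial_succ]
    rw [hf, Nat.factorial_succ, pow_succ]
    have h1 : ((2:ℝ)^k) ≠ 0 := by positivity
    have h3 : ((k.factorial : ℝ)) ≠ 0 := Nat.cast_ne_zero.mpr k.factorial_ne_zero
    push_cast
    field_simp

lemma bb_even (k : ℕ) : bb (2*k) = (-1)^k * aa (2*k) := by
  induction k with
  | zero => simp [aa, bb]
  | succ k ih =>
    have h2 : 2*(k+1) = (2*k)+2 := by ring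
    rw [h2, aa_two_step, bb_two_step, ih, pow_succ]
    ring

lemma aa_succ (h : ℕ) : aa (h+1) = h * aa (h-1) := by
  cases h with
  | zero => simp [aa]
  | succ m => rw [show m+1+1 = m+2 from rfl, aa_two_step]; simp

/-- `SS L h = E[(iX+Y)^L Y^h]` for independent standard Gaussians, algebraically. -/
noncomputable def SS (L h : ℕ) : ℝ :=
  ∑ n ∈ Finset.range (L+1), (L.choose n : ℝ) * bb n * aa (L + h - n)

lemma SS_star (L h : ℕ) : SS (L+2) h = SS (L+1) (h+1) - (L+1) * SS L h := by
  have e1 : SS (L+2) h =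
      (∑ j ∈ Finset.range (L+2),
        ((L+2).choose (j+1) : ℝ) * bb (j+1) * aa (L+1+h-j)) + bb 0 * aa (L+2+h) := by
    rw [SS, Finset.sum_range_succ']
    simp only [Nat.choose_zero_right, Nat.cast_one, one_mul, Nat.sub_zero]
    congr 1
    refine Finset.sum_congr rfl fun j _ => ?_
    have : L+2+h-(j+1) = L+1+h-j := by omega
    rw [this]
  have e3 : SS (L+2) h =
      ((∑ j ∈ Finset.range (L+2), ((L+1).choose j : ℝ) * bb (j+1) * aa (L+1+h-j)) +
       (∑ j ∈ Finset.range (L+2), ((L+1).choose (j+1) : ℝ) * bb (j+1) * aa (L+1+h-j))) +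
        bb 0 * aa (L+2+h) := by
    rw [e1, ← Finset.sum_add_distrib]
    congr 1
    refine Finset.sum_congr rfl fun j _ => ?_
    rw [show L+2 = (L+1)+1 from rfl, Nat.choose_succ_succ]
    push_cast; ring
  -- second sum plus the `bb 0` term is `SS (L+1) (h+1)`
  have e4 : SS (L+1) (h+1) =
      (∑ j ∈ Finset.range (L+2), ((L+1).choose (j+1) : ℝ) * bb (j+1) * aa (L+1+h-j)) +
      bb 0 * aa (L+2+h) := by
    rw [SS, Finset.sum_range_succ']
    rw [Finset.sum_range_succ
      (fun j => ((L+1).choose (j+1) : ℝ) * bb (j+1) * aa (L+1+h-j)) (L+1)]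
    rw [Nat.choose_succ_self]
    simp only [Nat.cast_zero, zero_mul, add_zero, Nat.choose_zero_right, Nat.cast_one,
      one_mul, Nat.sub_zero]
    congr 1
    · refine Finset.sum_congr rfl fun j _ => ?_
      have : L+1+(h+1)-(j+1) = L+1+h-j := by omega
      rw [this]
    · have : L+1+(h+1) = L+2+h := by omega
      rw [this]
  -- first sum is `-(L+1) * SS L h`
  have e5 : (∑ j ∈ Finset.range (L+2), ((L+1).choose j : ℝ) * bb (j+1) * aa (L+1+h-j)) =
      -((L:ℝ)+1) * SS L h := by
    rw [Finset.sum_range_succ']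
    have hb1 : bb 1 = 0 := bb_odd 0
    rw [hb1]
    simp only [mul_zero, zero_mul, add_zero]
    rw [SS, Finset.mul_sum]
    refine Finset.sum_congr rfl fun i _ => ?_
    have hbi : bb (i+1+1) = -((i:ℝ)+1) * bb i := by
      have := bb_two_step i
      push_cast at this ⊢
      exact this
    have hch : ((L+1).choose (i+1) : ℝ) * ((i:ℝ)+1) = ((L:ℝ)+1) * (L.choose i : ℝ) := by
      exact_mod_cast congrArg (Nat.cast (R := ℝ)) (Nat.add_one_mul_choose_eq L i).symm
    have hidx : L+1+h-(i+1) = L+h-i := by omega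
    rw [hbi, hidx]
    linear_combination (-(bb i * aa (L+h-i))) * hch
  rw [e3, e5]
  linarith [e4]

lemma SS_rec : ∀ L h, SS (L+1) h = h * SS L (h-1) := by
  intro L
  induction L using Nat.strong_induction_on with
  | _ L ih =>
    match L with
    | 0 =>
      intro h
      have hb1 : bb 1 = 0 := bb_odd 0
      have e : SS 1 h = aa (h+1) := by
        simp [SS, Finset.sum_range_succ, hb1, bb, Nat.add_comm 1 h]
      have e0 : SS 0 (h-1) = aa (h-1) := by simp [SS, bb]
      rw [e, e0, aa_succ]
    | 1 =>
      intro h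
      have hb1 : bb 1 = 0 := bb_odd 0
      have hb2 : bb 2 = -1 := by
        rw [show (2:ℕ) = 0+2 from rfl, bb_two_step]
        simp [bb]
      have ha : aa (2+h) = ((h:ℝ)+1) * aa h := by
        rw [show 2+h = h+2 from by omega, aa_two_step]
      have e2 : SS 2 h = h * aa h := by
        simp [SS, Finset.sum_range_succ, hb1, hb2, bb, ha]
        ring
      have e1 : SS 1 (h-1) = aa (h-1+1) := by
        simp [SS, Finset.sum_range_succ, hb1, bb, Nat.add_comm 1 (h-1)]
      rw [e2, e1]
      cases h with
      | zero => simp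
      | succ m => simp
    | (L+2) =>
      have ih1 : ∀ h', SS (L+2) h' = h' * SS (L+1) (h'-1) := ih (L+1) (by omega)
      have ih0 : ∀ h', SS (L+1) h' = h' * SS L (h'-1) := ih L (by omega)
      intro h
      cases h with
      | zero =>
        have hstar : SS (L+2+1) 0 = SS (L+2) 1 - (((L+1 : ℕ) : ℝ) + 1) * SS (L+1) 0 :=
          SS_star (L+1) 0
        rw [hstar, ih1 1, ih0 0]
        push_cast
        ring
      | succ m =>
        have hstar : SS (L+2+1) (m+1) = SS (L+2) (m+2) - (((L+1 : ℕ) : ℝ) + 1) * SS (L+1) (m+1) :=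
          SS_star (L+1) (m+1)
        have hstar2 : SS (L+2) m = SS (L+1) (m+1) - ((L:ℝ)+1) * SS L m := SS_star L m
        have h1 : SS (L+2) (m+2) = ((m:ℝ)+2) * SS (L+1) (m+1) := by
          have := ih1 (m+2)
          simpa using this
        have h2 : SS (L+1) (m+1) = ((m:ℝ)+1) * SS L m := by
          have := ih0 (m+1)
          simpa using this
        rw [hstar, h1]
        simp only [Nat.add_sub_cancel]
        rw [hstar2]
        push_cast
        linear_combination (-((L:ℝ)+1)) * h2

lemma SS_eq_zero : ∀ h L, h < L → SS L h = 0 := by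
  intro h
  induction h with
  | zero =>
    intro L hL
    obtain ⟨L', rfl⟩ : ∃ L', L = L'+1 := ⟨L-1, by omega⟩
    rw [SS_rec]; simp
  | succ h ih =>
    intro L hL
    obtain ⟨L', rfl⟩ : ∃ L', L = L'+1 := ⟨L-1, by omega⟩
    rw [SS_rec]
    simp only [Nat.add_sub_cancel]
    rw [ih L' (by omega)]
    ring

/-- The key combinatorial identity `A_h = 0` from the proof of Lemma 2 of the paper:
for even `ℓ ≥ 2` and `0 ≤ h < ℓ/2`,
`∑_{n even, 0 ≤ n ≤ ℓ-h} (-1)^{n/2} · n!(ℓ-n)! / ((n/2)!((ℓ-n)/2)!) · C(ℓ-h, n) = 0`. -/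
theorem stmt3 (ℓ h : ℕ) (hℓ : 2 ≤ ℓ) (hev : Even ℓ) (hh : h < ℓ / 2) :
    ∑ n ∈ (Finset.range (ℓ - h + 1)).filter (fun n => Even n),
      (-1 : ℝ) ^ (n / 2) *
        ((Nat.factorial n : ℝ) * (Nat.factorial (ℓ - n) : ℝ) /
          ((Nat.factorial (n / 2) : ℝ) * (Nat.factorial ((ℓ - n) / 2) : ℝ))) *
        ((ℓ - h).choose n : ℝ) = 0 := by
  obtain ⟨c, hc⟩ := hev
  have hhc : h < c := by omega
  set L := ℓ - h with hLdef
  have hL : L + h = ℓ := by omega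
  rw [Finset.sum_filter]
  have key : ∀ n ∈ Finset.range (L+1),
      (if Even n then
        (-1 : ℝ) ^ (n / 2) *
        ((Nat.factorial n : ℝ) * (Nat.factorial (ℓ - n) : ℝ) /
          ((Nat.factorial (n / 2) : ℝ) * (Nat.factorial ((ℓ - n) / 2) : ℝ))) *
        ((ℓ - h).choose n : ℝ) else 0)
      = (2:ℝ)^c * ((L.choose n : ℝ) * bb n * aa (L + h - n)) := by
    intro n hn
    rw [Finset.mem_range] at hn
    by_cases he : Even n
    · obtain ⟨s, hs⟩ := he
      have hn2 : n = 2*s := by omega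
      have hsc : s ≤ c := by omega
      have hln : ℓ - n = 2*(c-s) := by omega
      have hnd : n / 2 = s := by omega
      have hld : (ℓ - n) / 2 = c - s := by omega
      rw [if_pos ⟨s, hs⟩]
      rw [hnd, hld, show L + h - n = ℓ - n from by omega, hln, hn2]
      rw [bb_even, aa_even, aa_even]
      have h1 : ((s.factorial : ℝ)) ≠ 0 := Nat.cast_ne_zero.mpr s.factorial_ne_zero
      have h2 : (((c-s).factorial : ℝ)) ≠ 0 := Nat.cast_ne_zero.mpr (c-s).factorial_ne_zero
      have h3 : ((2:ℝ)^s) ≠ 0 := by positivity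
      have h4 : ((2:ℝ)^(c-s)) ≠ 0 := by positivity
      have hcs : (2:ℝ)^c = 2^s * 2^(c-s) := by
        rw [← pow_add]; congr 1; omega
      rw [hcs]
      field_simp
      ring
    · rw [if_neg he]
      obtain ⟨k, hk⟩ := Nat.not_even_iff_odd.mp he
      have hk2 : n = 2*k+1 := by omega
      rw [hk2, bb_odd]
      ring
  rw [Finset.sum_congr rfl key, ← Finset.mul_sum]
  have hSS : (∑ n ∈ Finset.range (L+1), (L.choose n : ℝ) * bb n * aa (L + h - n)) = SS L h := rfl
  rw [hSS, SS_eq_zero h L (by omega), mul_zero]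
end

section
/- For every integer k ≥ 1, ∫₀^∞ ln(√(2u)) L_k(u) e^{-u} du = −1/(2k), and for k = 0, ∫₀^∞ ln(√(2u)) e^{-u} du = (ln 2 − γ)/2, where γ is the Euler–Mascheroni constant. -/
open MeasureTheory Real

/-- The Laguerre polynomial of degree `k`, `L_k(u) = ∑_{i=0}^k C(k,i) (-u)^i / i!`. -/
noncomputable def laguerre (k : ℕ) (u : ℝ) : ℝ :=
  ∑ i ∈ Finset.range (k + 1), (k.choose i : ℝ) * (-u) ^ i / (Nat.factorial i : ℝ)

open Finset Set Filter Asymptotics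
open scoped Topology



lemma alt_choose_real (k : ℕ) :
    ∑ i ∈ range (k + 1), (-1 : ℝ) ^ i * (k.choose i : ℝ) = if k = 0 then 1 else 0 := by
  have := Int.alternating_sum_range_choose (n := k)
  have := congrArg (fun z : ℤ => (z : ℝ)) this
  push_cast at this
  simpa using this

lemma alt_choose_div (m : ℕ) :
    ∑ j ∈ range (m + 1), (-1 : ℝ) ^ j * (m.choose j : ℝ) / (j + 1) = 1 / (m + 1) := by
  have h1 : ∀ j ∈ range (m + 1), (-1 : ℝ) ^ j * (m.choose j : ℝ) / (j + 1)
      = (1 / (m + 1)) * ((-1 : ℝ) ^ j * ((m+1).choose (j+1) : ℝ)) := by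
    intro j _
    have h := Nat.add_one_mul_choose_eq m j
    have h' : ((m : ℝ) + 1) * (m.choose j : ℝ) = ((m+1).choose (j+1) : ℝ) * ((j : ℝ) + 1) := by
      exact_mod_cast congrArg (fun z : ℕ => (z : ℝ)) h
    have hj : ((j : ℝ) + 1) ≠ 0 := by positivity
    have hm : ((m : ℝ) + 1) ≠ 0 := by positivity
    field_simp
    linear_combination h'
  rw [Finset.sum_congr rfl h1, ← Finset.mul_sum]
  have h2 : ∑ j ∈ range (m + 1), (-1 : ℝ) ^ j * ((m+1).choose (j+1) : ℝ) = 1 := by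
    have h0 := alt_choose_real (m + 1)
    rw [Finset.sum_range_succ'] at h0
    simp only [Nat.add_eq_zero, one_ne_zero, and_false, if_false, pow_zero, one_mul,
      Nat.choose_zero_right, Nat.cast_one] at h0
    have : ∑ i ∈ range (m + 1), (-1:ℝ)^(i+1) * ((m+1).choose (i+1) : ℝ) = -1 := by linarith
    have e : ∀ i ∈ range (m+1), (-1:ℝ)^(i+1) * ((m+1).choose (i+1) : ℝ)
        = -((-1:ℝ)^i * ((m+1).choose (i+1) : ℝ)) := by
      intro i _; ring
    rw [Finset.sum_congr rfl e, Finset.sum_neg_distrib] at this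
    linarith
  rw [h2, mul_one]

lemma alt_choose_harmonic (m : ℕ) :
    ∑ i ∈ range (m + 2), (-1 : ℝ) ^ i * ((m+1).choose i : ℝ) * (harmonic i : ℝ)
      = -1 / (m + 1) := by
  rw [Finset.sum_range_succ']
  simp only [harmonic_zero, Rat.cast_zero, mul_zero, add_zero]
  have key : ∀ j ∈ range (m + 1),
      (-1 : ℝ) ^ (j+1) * ((m+1).choose (j+1) : ℝ) * (harmonic (j+1) : ℝ)
      = -((-1:ℝ)^j * (m.choose j : ℝ) * (harmonic j : ℝ))
        - ((-1:ℝ)^j * (m.choose j : ℝ) / (j+1))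
        - ((-1:ℝ)^j * (m.choose (j+1) : ℝ) * (harmonic (j+1) : ℝ)) := by
    intro j _
    have hc : ((m+1).choose (j+1) : ℝ) = (m.choose j : ℝ) + (m.choose (j+1) : ℝ) := by
      exact_mod_cast congrArg (fun z : ℕ => (z:ℝ)) (Nat.choose_succ_succ m j)
    have hh : (harmonic (j+1) : ℝ) = (harmonic j : ℝ) + 1/((j:ℝ)+1) := by
      have := harmonic_succ j
      push_cast [this]
      norm_num
    have hj : ((j:ℝ)+1) ≠ 0 := by positivity
    rw [hc, hh]
    field_simp
    ring
  rw [Finset.sum_congr rfl key]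
  rw [Finset.sum_sub_distrib, Finset.sum_sub_distrib]
  have h3 : ∑ j ∈ range (m+1), (-1:ℝ)^j * (m.choose (j+1) : ℝ) * (harmonic (j+1) : ℝ)
      = -∑ j ∈ range (m+1), (-1:ℝ)^j * (m.choose j : ℝ) * (harmonic j : ℝ) := by
    have e : ∀ j ∈ range (m+1), (-1:ℝ)^j * (m.choose (j+1) : ℝ) * (harmonic (j+1) : ℝ)
        = -((-1:ℝ)^(j+1) * (m.choose (j+1) : ℝ) * (harmonic (j+1) : ℝ)) := by
      intro j _; ring
    rw [Finset.sum_congr rfl e, Finset.sum_neg_distrib]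
    congr 1
    have := Finset.sum_range_succ' (fun i => (-1:ℝ)^i * (m.choose i : ℝ) * (harmonic i : ℝ)) (m+1)
    simp only [harmonic_zero, Rat.cast_zero, mul_zero, add_zero] at this
    rw [← this, Finset.sum_range_succ]
    simp [Nat.choose_succ_self]
  rw [h3, alt_choose_div, Finset.sum_neg_distrib]
  ring

open MeasureTheory Real Set Filter Asymptotics
open scoped Topology

local notation "γ" => Real.eulerMascheroniConstant

/-- Mellin machinery applied to `exp (-t)`. -/
lemma mellin_exp (s : ℂ) (hs : 0 < s.re) :
    MellinConvergent (fun t : ℝ => Real.log t • (Real.exp (-t) : ℂ)) s ∧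
      HasDerivAt Complex.GammaIntegral
        (mellin (fun t : ℝ => Real.log t • (Real.exp (-t) : ℂ)) s) s := by
  rw [Complex.GammaIntegral_eq_mellin]
  refine mellin_hasDerivAt_of_isBigO_rpow (E := ℂ) ?_ ?_ (lt_add_one _) ?_ hs
  · refine (Continuous.continuousOn ?_).locallyIntegrableOn measurableSet_Ioi
    exact Complex.continuous_ofReal.comp (Real.continuous_exp.comp continuous_neg)
  · rw [← isBigO_norm_left]
    simp_rw [Complex.norm_real, isBigO_norm_left]
    simpa only [neg_one_mul] using (isLittleO_exp_neg_mul_rpow_atTop zero_lt_one _).isBigO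
  · simp_rw [neg_zero, Real.rpow_zero]
    refine isBigO_const_of_tendsto (?_ : Tendsto _ _ (𝓝 (1 : ℂ))) one_ne_zero
    rw [(by simp : (1 : ℂ) = Real.exp (-0))]
    exact (Complex.continuous_ofReal.comp
      (Real.continuous_exp.comp continuous_neg)).continuousWithinAt

lemma pow_log_exp_eq (n : ℕ) (t : ℝ) :
    ((t : ℂ) ^ ((n : ℂ) + 1 - 1)) • (Real.log t • (Real.exp (-t) : ℂ))
      = ((t ^ n * (Real.log t * Real.exp (-t)) : ℝ) : ℂ) := by
  rw [add_sub_cancel_right, Complex.cpow_natCast, smul_eq_mul, Complex.real_smul]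
  push_cast
  ring

lemma integrable_pow_log_exp (n : ℕ) :
    IntegrableOn (fun t : ℝ => t ^ n * (Real.log t * Real.exp (-t))) (Ioi 0) := by
  have h := (mellin_exp ((n : ℂ) + 1) (by simp; positivity)).1
  unfold MellinConvergent at h
  have h2 : IntegrableOn
      (fun t : ℝ => ((t ^ n * (Real.log t * Real.exp (-t)) : ℝ) : ℂ)) (Ioi 0) := by
    refine h.congr_fun (fun t _ => ?_) measurableSet_Ioi
    exact pow_log_exp_eq n t
  have h3 := h2.re
  simpa only [IntegrableOn, RCLike.re_to_complex, Complex.ofReal_re] using h3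

lemma integral_pow_log_exp (n : ℕ) :
    ∫ t in Ioi (0 : ℝ), t ^ n * (Real.log t * Real.exp (-t))
      = n.factorial * (-γ + (harmonic n : ℝ)) := by
  have h := (mellin_exp ((n : ℂ) + 1) (by simp; positivity)).2
  -- GammaIntegral agrees with Gamma near n+1
  have hev : Complex.GammaIntegral =ᶠ[𝓝 ((n : ℂ) + 1)] Complex.Gamma := by
    have hopen : IsOpen {z : ℂ | 0 < z.re} := isOpen_lt continuous_const Complex.continuous_re
    filter_upwards [hopen.mem_nhds (by simp; positivity)] with z hz
    exact (Complex.Gamma_eq_integral hz).symm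
  have hG : HasDerivAt Complex.Gamma
      (mellin (fun t : ℝ => Real.log t • (Real.exp (-t) : ℂ)) ((n : ℂ) + 1)) ((n : ℂ) + 1) :=
    h.congr_of_eventuallyEq hev.symm
  have hval := hG.unique (Complex.hasDerivAt_Gamma_nat n)
  have hmel : mellin (fun t : ℝ => Real.log t • (Real.exp (-t) : ℂ)) ((n : ℂ) + 1)
      = ((∫ t in Ioi (0 : ℝ), t ^ n * (Real.log t * Real.exp (-t)) : ℝ) : ℂ) := by
    unfold mellin
    rw [show (fun t : ℝ => ((t : ℂ) ^ ((n : ℂ) + 1 - 1)) • (Real.log t • (Real.exp (-t) : ℂ)))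
        = (fun t : ℝ => ((t ^ n * (Real.log t * Real.exp (-t)) : ℝ) : ℂ)) from
      funext fun t => pow_log_exp_eq n t]
    exact integral_ofReal
  rw [hmel] at hval
  have : ((∫ t in Ioi (0 : ℝ), t ^ n * (Real.log t * Real.exp (-t)) : ℝ) : ℂ)
      = ((n.factorial * (-γ + (harmonic n : ℝ)) : ℝ) : ℂ) := by
    rw [hval]; push_cast; ring
  exact_mod_cast this

lemma integral_pow_exp (n : ℕ) :
    ∫ t in Ioi (0 : ℝ), t ^ n * Real.exp (-t) = n.factorial := by
  have h := Real.Gamma_eq_integral (s := (n : ℝ) + 1) (by positivity)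
  have h2 : Real.Gamma ((n : ℝ) + 1) = n.factorial := by
    exact_mod_cast Real.Gamma_nat_eq_factorial n
  rw [h2] at h
  rw [h]
  refine setIntegral_congr_fun measurableSet_Ioi (fun t ht => ?_)
  rw [add_sub_cancel_right, Real.rpow_natCast, mul_comm]

lemma integrable_pow_exp (n : ℕ) :
    IntegrableOn (fun t : ℝ => t ^ n * Real.exp (-t)) (Ioi 0) := by
  have h := Real.GammaIntegral_convergent (s := (n : ℝ) + 1) (by positivity)
  refine h.congr_fun (fun t ht => ?_) measurableSet_Ioi
  dsimp only
  rw [add_sub_cancel_right, Real.rpow_natCast, mul_comm]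

lemma logsqrt_eq {u : ℝ} (hu : 0 < u) :
    Real.log (Real.sqrt (2 * u)) = (Real.log 2 + Real.log u) / 2 := by
  rw [Real.log_sqrt (by linarith), Real.log_mul two_ne_zero hu.ne']

lemma key_int (i : ℕ) :
    IntegrableOn (fun u : ℝ => Real.log (Real.sqrt (2*u)) * (u^i * Real.exp (-u))) (Ioi 0) ∧
    ∫ u in Ioi (0:ℝ), Real.log (Real.sqrt (2*u)) * (u^i * Real.exp (-u))
      = i.factorial * ((Real.log 2 - γ + (harmonic i : ℝ)) / 2) := by
  set g : ℝ → ℝ := fun u => (Real.log 2 / 2) * (u^i * Real.exp (-u))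
      + (1/2) * (u^i * (Real.log u * Real.exp (-u))) with hg
  have hgi : IntegrableOn g (Ioi 0) :=
    ((integrable_pow_exp i).const_mul _).add ((integrable_pow_log_exp i).const_mul _)
  have heq : ∀ u ∈ Ioi (0:ℝ),
      Real.log (Real.sqrt (2*u)) * (u^i * Real.exp (-u)) = g u := by
    intro u hu
    rw [logsqrt_eq (mem_Ioi.mp hu), hg]
    ring
  constructor
  · exact hgi.congr_fun (fun u hu => (heq u hu).symm) measurableSet_Ioi
  · rw [setIntegral_congr_fun measurableSet_Ioi heq, hg]
    rw [integral_add ((integrable_pow_exp i).const_mul _) ((integrable_pow_log_exp i).const_mul _),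
      integral_const_mul, integral_const_mul, integral_pow_exp, integral_pow_log_exp]
    ring

/-- The Laguerre coefficients of `A(r) = ln r`:
`∫₀^∞ ln(√(2u)) L_k(u) e^{-u} du = -1/(2k)` for `k ≥ 1`, while for `k = 0` the integral
equals `(ln 2 - γ)/2`, `γ` being the Euler–Mascheroni constant. -/
theorem stmt5 :
    (∀ k : ℕ, 1 ≤ k →
      ∫ u in Set.Ioi (0 : ℝ),
        Real.log (Real.sqrt (2 * u)) * laguerre k u * Real.exp (-u) = -1 / (2 * (k : ℝ))) ∧
    (∫ u in Set.Ioi (0 : ℝ), Real.log (Real.sqrt (2 * u)) * Real.exp (-u) =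
      (Real.log 2 - Real.eulerMascheroniConstant) / 2) := by
  constructor
  · rintro k hk
    obtain ⟨m, rfl⟩ : ∃ m, k = m + 1 := ⟨k - 1, by omega⟩
    set k := m + 1
    have hpt : ∀ u ∈ Ioi (0:ℝ),
        Real.log (Real.sqrt (2 * u)) * laguerre k u * Real.exp (-u)
        = ∑ i ∈ Finset.range (k+1), ((k.choose i : ℝ) * (-1)^i / (i.factorial : ℝ))
            * (Real.log (Real.sqrt (2*u)) * (u^i * Real.exp (-u))) := by
      intro u _
      rw [laguerre, Finset.mul_sum, Finset.sum_mul]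
      refine Finset.sum_congr rfl (fun i _ => ?_)
      rw [neg_pow]
      ring
    rw [setIntegral_congr_fun measurableSet_Ioi hpt]
    rw [integral_finset_sum _ (fun i _ => ((key_int i).1.const_mul _))]
    have : ∀ i ∈ Finset.range (k+1),
        ∫ u in Ioi (0:ℝ), ((k.choose i : ℝ) * (-1)^i / (i.factorial : ℝ))
            * (Real.log (Real.sqrt (2*u)) * (u^i * Real.exp (-u)))
        = ((Real.log 2 - γ)/2) * ((-1:ℝ)^i * (k.choose i : ℝ))
          + (1/2) * ((-1:ℝ)^i * (k.choose i : ℝ) * (harmonic i : ℝ)) := by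
      intro i _
      rw [integral_const_mul, (key_int i).2]
      have hfac : (i.factorial : ℝ) ≠ 0 := Nat.cast_ne_zero.mpr i.factorial_ne_zero
      field_simp
    rw [Finset.sum_congr rfl this, Finset.sum_add_distrib, ← Finset.mul_sum, ← Finset.mul_sum,
      alt_choose_real, alt_choose_harmonic m]
    simp only [k, Nat.add_eq_zero, one_ne_zero, and_false, if_false]
    push_cast
    field_simp
    ring
  · have hpt : ∀ u ∈ Ioi (0:ℝ),
        Real.log (Real.sqrt (2 * u)) * Real.exp (-u)
        = Real.log (Real.sqrt (2*u)) * (u^0 * Real.exp (-u)) := by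
      intro u _; simp
    rw [setIntegral_congr_fun measurableSet_Ioi hpt, (key_int 0).2]
    simp
end

section
/- Let α > 0 and β ∈ (0,1). Let C_ψ : ℝ → ℂ be bounded and continuous and set ψ̂(λ) = C_ψ(λ)|λ|^α; assume ψ̂ ∈ L²(ℝ). Let C_X : ℝ → [0,∞) be bounded and continuous. Define σ_j² = ∫_ℝ |ψ̂(2^j λ)|² C_X(λ) |λ|^{β−1} dλ for j ∈ ℤ. Then lim_{j→∞} 2^{jβ} σ_j² = C_X(0) ∫_ℝ |ψ̂(λ)|² |λ|^{β−1} dλ, and this limit integral is finite. -/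
open MeasureTheory Real Filter

lemma aux_abs_rpow_II {s : ℝ} (hs : -1 < s) :
    IntervalIntegrable (fun x : ℝ => |x| ^ s) volume 0 1 := by
  rw [intervalIntegrable_iff_integrableOn_Ioc_of_le zero_le_one]
  have h := (intervalIntegral.intervalIntegrable_rpow' hs (a := 0) (b := 1))
  rw [intervalIntegrable_iff_integrableOn_Ioc_of_le zero_le_one] at h
  exact h.congr_fun (fun x hx => by rw [abs_of_pos hx.1]) measurableSet_Ioc

lemma aux_abs_rpow_integrableOn {s : ℝ} (hs : -1 < s) :
    IntegrableOn (fun x : ℝ => |x| ^ s) (Set.Icc (-1 : ℝ) 1) := by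
  have h1 := aux_abs_rpow_II hs
  have h2 : IntervalIntegrable (fun x : ℝ => |x| ^ s) volume (-1) 0 := by
    rw [IntervalIntegrable.iff_comp_neg]
    simpa using h1.symm
  have := h2.trans h1
  rwa [intervalIntegrable_iff_integrableOn_Icc_of_le (by norm_num)] at this

/-- Large-scale behaviour of the wavelet-coefficient variance: under Assumption 1 on the
wavelet (`ψ̂(λ) = C_ψ(λ)|λ|^α`) and Assumption 2(b) on the spectral density
(`f_X(λ) = C_X(λ)|λ|^{β-1}`), we have
`2^{jβ} σ_j² → C_X(0) ∫ |ψ̂(λ)|² |λ|^{β-1} dλ` as `j → ∞`, and the limit integral is finite. -/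
theorem stmt7 (α β : ℝ) (hα : 0 < α) (hβ : β ∈ Set.Ioo (0 : ℝ) 1)
    (Cψ : ℝ → ℂ) (hCψc : Continuous Cψ) (hCψb : ∃ M, ∀ x, ‖Cψ x‖ ≤ M)
    (CX : ℝ → ℝ) (hCXc : Continuous CX) (hCXnn : ∀ x, 0 ≤ CX x) (hCXb : ∃ M, ∀ x, CX x ≤ M)
    (ψhat : ℝ → ℂ) (hψ : ∀ lam : ℝ, ψhat lam = Cψ lam * Complex.ofReal (|lam| ^ α))
    (hψL2 : MemLp ψhat 2 volume) :
    Tendsto (fun j : ℤ => (2 : ℝ) ^ ((j : ℝ) * β) *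
        ∫ lam : ℝ, ‖ψhat ((2 : ℝ) ^ j * lam)‖ ^ 2 * CX lam * |lam| ^ (β - 1))
      atTop (nhds (CX 0 * ∫ lam : ℝ, ‖ψhat lam‖ ^ 2 * |lam| ^ (β - 1))) ∧
    Integrable (fun lam : ℝ => ‖ψhat lam‖ ^ 2 * |lam| ^ (β - 1)) := by
  obtain ⟨hβ0, hβ1⟩ := hβ
  obtain ⟨M, hM⟩ := hCψb
  obtain ⟨M₂, hM₂⟩ := hCXb
  have hM₂0 : 0 ≤ M₂ := le_trans (hCXnn 0) (hM₂ 0)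
  have hψc : Continuous ψhat := by
    have : Continuous fun lam : ℝ => Cψ lam * Complex.ofReal (|lam| ^ α) :=
      hCψc.mul (Complex.continuous_ofReal.comp (continuous_abs.rpow_const fun x => Or.inr hα.le))
    exact this.congr fun x => (hψ x).symm
  have hmeas : AEStronglyMeasurable (fun lam : ℝ => ‖ψhat lam‖ ^ 2 * |lam| ^ (β - 1)) volume := by
    have : Measurable (fun lam : ℝ => ‖ψhat lam‖ ^ 2 * |lam| ^ (β - 1)) := by fun_prop
    exact this.aestronglyMeasurable
  have hM0 : 0 ≤ M := le_trans (norm_nonneg _) (hM 0)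
  have hsq : Integrable (fun lam : ℝ => ‖ψhat lam‖ ^ 2) volume := by
    have h := hψL2.integrable_norm_rpow (by norm_num) (by norm_num)
    simp only [ENNReal.toReal_ofNat] at h
    refine h.congr (ae_of_all _ fun x => ?_)
    simp [Real.rpow_natCast]
  -- Integrability of the limit integrand
  have hg_int : Integrable (fun lam : ℝ => ‖ψhat lam‖ ^ 2 * |lam| ^ (β - 1)) := by
    have hIcc : IntegrableOn (fun lam : ℝ => ‖ψhat lam‖ ^ 2 * |lam| ^ (β - 1))
        (Set.Icc (-1 : ℝ) 1) := by
      refine Integrable.mono'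
        ((aux_abs_rpow_integrableOn (s := 2 * α + (β - 1)) (by linarith)).const_mul (M ^ 2))
        hmeas.restrict ?_
      refine (ae_restrict_iff' measurableSet_Icc).2 (ae_of_all _ fun x _ => ?_)
      have hb : 0 ≤ ‖ψhat x‖ ^ 2 * |x| ^ (β - 1) :=
        mul_nonneg (by positivity) (Real.rpow_nonneg (abs_nonneg x) _)
      rw [Real.norm_of_nonneg hb]
      have hnorm : ‖ψhat x‖ = ‖Cψ x‖ * |x| ^ α := by
        rw [hψ x, norm_mul, Complex.norm_real,
          Real.norm_of_nonneg (Real.rpow_nonneg (abs_nonneg x) _)]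
      rcases eq_or_ne x 0 with rfl | hx
      · simp only [abs_zero, Real.zero_rpow (by linarith : β - 1 ≠ 0), mul_zero]
        positivity
      · have habs : (0 : ℝ) < |x| := abs_pos.2 hx
        rw [hnorm, mul_pow, ← Real.rpow_natCast (|x| ^ α) 2, ← Real.rpow_mul (abs_nonneg x)]
        rw [mul_assoc, ← Real.rpow_add habs]
        have h1 : ‖Cψ x‖ ^ 2 ≤ M ^ 2 := by
          have := hM x
          nlinarith [norm_nonneg (Cψ x)]
        have h2 : (0 : ℝ) ≤ |x| ^ (α * 2 + (β - 1)) := Real.rpow_nonneg (abs_nonneg x) _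
        calc ‖Cψ x‖ ^ 2 * |x| ^ (α * 2 + (β - 1)) ≤ M ^ 2 * |x| ^ (α * 2 + (β - 1)) :=
              mul_le_mul_of_nonneg_right h1 h2
          _ = M ^ 2 * |x| ^ (2 * α + (β - 1)) := by ring_nf
    have hoff : IntegrableOn (fun lam : ℝ => ‖ψhat lam‖ ^ 2 * |lam| ^ (β - 1))
        (Set.Icc (-1 : ℝ) 1)ᶜ := by
      refine Integrable.mono' hsq.integrableOn hmeas.restrict ?_
      refine (ae_restrict_iff' measurableSet_Icc.compl).2 (ae_of_all _ fun x hx => ?_)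
      have hb : 0 ≤ ‖ψhat x‖ ^ 2 * |x| ^ (β - 1) :=
        mul_nonneg (by positivity) (Real.rpow_nonneg (abs_nonneg x) _)
      rw [Real.norm_of_nonneg hb]
      have h1 : (1 : ℝ) ≤ |x| := by
        simp only [Set.mem_compl_iff, Set.mem_Icc, not_and_or, not_le] at hx
        rcases hx with h | h
        · rw [abs_of_neg (by linarith)]; linarith
        · rw [abs_of_pos (by linarith)]; linarith
      have h2 : |x| ^ (β - 1) ≤ 1 := Real.rpow_le_one_of_one_le_of_nonpos h1 (by linarith)
      calc ‖ψhat x‖ ^ 2 * |x| ^ (β - 1) ≤ ‖ψhat x‖ ^ 2 * 1 :=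
            mul_le_mul_of_nonneg_left h2 (by positivity)
        _ = ‖ψhat x‖ ^ 2 := mul_one _
    have := hIcc.union hoff
    rwa [Set.union_compl_self, integrableOn_univ] at this
  refine ⟨?_, hg_int⟩
  -- change of variables
  have key : ∀ j : ℤ, (2 : ℝ) ^ ((j : ℝ) * β) *
      ∫ lam : ℝ, ‖ψhat ((2 : ℝ) ^ j * lam)‖ ^ 2 * CX lam * |lam| ^ (β - 1)
      = ∫ u : ℝ, ‖ψhat u‖ ^ 2 * CX (((2 : ℝ) ^ j)⁻¹ * u) * |u| ^ (β - 1) := by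
    intro j
    set c : ℝ := (2 : ℝ) ^ j with hc
    have hc0 : (0 : ℝ) < c := zpow_pos two_pos j
    have hci : (0 : ℝ) < c⁻¹ := inv_pos.2 hc0
    set G : ℝ → ℝ := fun u => ‖ψhat u‖ ^ 2 * CX (c⁻¹ * u) * |c⁻¹ * u| ^ (β - 1) with hG
    have h1 : (fun lam : ℝ => ‖ψhat (c * lam)‖ ^ 2 * CX lam * |lam| ^ (β - 1))
        = fun lam => G (c * lam) := by
      funext lam
      simp only [hG, inv_mul_cancel_left₀ hc0.ne']
    rw [h1, MeasureTheory.Measure.integral_comp_mul_left G c]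
    have h2 : ∫ u, G u = c⁻¹ ^ (β - 1) *
        ∫ u : ℝ, ‖ψhat u‖ ^ 2 * CX (c⁻¹ * u) * |u| ^ (β - 1) := by
      rw [← MeasureTheory.integral_const_mul]
      congr 1
      funext u
      simp only [hG]
      rw [abs_mul, abs_of_pos hci, Real.mul_rpow hci.le (abs_nonneg u)]
      ring
    rw [h2, smul_eq_mul, abs_of_pos hci]
    have h3 : (2 : ℝ) ^ ((j : ℝ) * β) * (c⁻¹ * (c⁻¹ ^ (β - 1) *
        ∫ u : ℝ, ‖ψhat u‖ ^ 2 * CX (c⁻¹ * u) * |u| ^ (β - 1)))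
        = ((2 : ℝ) ^ ((j : ℝ) * β) * c⁻¹ * c⁻¹ ^ (β - 1)) *
        ∫ u : ℝ, ‖ψhat u‖ ^ 2 * CX (c⁻¹ * u) * |u| ^ (β - 1) := by ring
    rw [h3]
    have h4 : (2 : ℝ) ^ ((j : ℝ) * β) * c⁻¹ * c⁻¹ ^ (β - 1) = 1 := by
      have hcr : c = (2 : ℝ) ^ (j : ℝ) := (Real.rpow_intCast 2 j).symm
      rw [hcr, ← Real.rpow_neg (by norm_num : (0 : ℝ) ≤ 2),
        ← Real.rpow_mul (by norm_num : (0 : ℝ) ≤ 2),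
        ← Real.rpow_add two_pos, ← Real.rpow_add two_pos,
        show (j : ℝ) * β + -(j : ℝ) + -(j : ℝ) * (β - 1) = 0 by ring, Real.rpow_zero]
    rw [h4, one_mul]
  simp only [key]
  -- dominated convergence
  have htarget : CX 0 * ∫ lam : ℝ, ‖ψhat lam‖ ^ 2 * |lam| ^ (β - 1)
      = ∫ lam : ℝ, CX 0 * (‖ψhat lam‖ ^ 2 * |lam| ^ (β - 1)) :=
    (MeasureTheory.integral_const_mul _ _).symm
  rw [htarget]
  refine tendsto_integral_filter_of_dominated_convergence
    (fun u => M₂ * (‖ψhat u‖ ^ 2 * |u| ^ (β - 1))) ?_ ?_ (hg_int.const_mul M₂) ?_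
  · refine Eventually.of_forall fun j => ?_
    have : Measurable fun u : ℝ => ‖ψhat u‖ ^ 2 * CX (((2 : ℝ) ^ j)⁻¹ * u) * |u| ^ (β - 1) := by
      fun_prop
    exact this.aestronglyMeasurable
  · refine Eventually.of_forall fun j => ae_of_all _ fun u => ?_
    have hb : 0 ≤ ‖ψhat u‖ ^ 2 * CX (((2 : ℝ) ^ j)⁻¹ * u) * |u| ^ (β - 1) :=
      mul_nonneg (mul_nonneg (by positivity) (hCXnn _)) (Real.rpow_nonneg (abs_nonneg u) _)
    rw [Real.norm_of_nonneg hb]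
    have h1 : ‖ψhat u‖ ^ 2 * CX (((2 : ℝ) ^ j)⁻¹ * u) * |u| ^ (β - 1)
        = CX (((2 : ℝ) ^ j)⁻¹ * u) * (‖ψhat u‖ ^ 2 * |u| ^ (β - 1)) := by ring
    rw [h1]
    exact mul_le_mul_of_nonneg_right (hM₂ _)
      (mul_nonneg (by positivity) (Real.rpow_nonneg (abs_nonneg u) _))
  · refine ae_of_all _ fun u => ?_
    have hzero : Tendsto (fun j : ℤ => ((2 : ℝ) ^ j)⁻¹ * u) atTop (nhds 0) := by
      have h0 : Tendsto (fun x : ℝ => ((2 : ℝ)⁻¹) ^ x) atTop (nhds 0) :=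
        tendsto_rpow_atTop_of_base_lt_one _ (by norm_num) (by norm_num)
      have h1 : Tendsto (fun j : ℤ => ((2 : ℝ)⁻¹) ^ (j : ℝ)) atTop (nhds 0) :=
        h0.comp tendsto_intCast_atTop_atTop
      have h2 : (fun j : ℤ => ((2 : ℝ) ^ j)⁻¹) = fun j : ℤ => ((2 : ℝ)⁻¹) ^ (j : ℝ) := by
        funext j
        rw [Real.rpow_intCast, ← inv_zpow]
      rw [show (0 : ℝ) = 0 * u by ring]
      exact Tendsto.mul_const u (h2 ▸ h1)
    have hCXlim : Tendsto (fun j : ℤ => CX (((2 : ℝ) ^ j)⁻¹ * u)) atTop (nhds (CX 0)) :=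
      (hCXc.tendsto 0).comp hzero
    have : Tendsto (fun j : ℤ => ‖ψhat u‖ ^ 2 * CX (((2 : ℝ) ^ j)⁻¹ * u) * |u| ^ (β - 1))
        atTop (nhds (‖ψhat u‖ ^ 2 * CX 0 * |u| ^ (β - 1))) :=
      (hCXlim.const_mul _).mul_const _
    convert this using 2
    ring
end

section
/- Let α > 0 and β₁, β₂ ∈ (0,1). Let C_ψ : ℝ → ℂ be bounded and continuous with C_ψ(0) ≠ 0, set ψ̂(λ) = C_ψ(λ)|λ|^α, and assume ψ̂ ∈ L²(ℝ). For p = 1, 2 let C_{X_p} : ℝ → [0,∞) be bounded and continuous with C_{X_p}(0) > 0, and define σ_{p,j}² = ∫_ℝ |ψ̂(2^j λ)|² C_{X_p}(λ) |λ|^{β_p − 1} dλ for j ∈ ℤ. Then liminf_{j→∞} (1/j) |ln σ_{1,j} − ln σ_{2,j}| ≥ (ln 2 / 2) · |β₁ − β₂|. -/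
open MeasureTheory Real Filter
open Set

private lemma two_zpow_tendsto : Tendsto (fun j : ℤ => (2:ℝ) ^ j) atTop atTop := by
  apply tendsto_atTop_atTop_of_monotone (zpow_right_mono₀ (one_le_two))
  intro b
  obtain ⟨n, hn⟩ := pow_unbounded_of_one_lt b (one_lt_two (α := ℝ))
  exact ⟨n, by rw [zpow_natCast]; exact hn.le⟩

private lemma aux_main (α β : ℝ) (hα : 0 < α) (hβ : β ∈ Set.Ioo (0 : ℝ) 1)
    (Cψ : ℝ → ℂ) (hCψc : Continuous Cψ) (hCψb : ∃ M, ∀ x, ‖Cψ x‖ ≤ M) (hCψ0 : Cψ 0 ≠ 0)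
    (ψhat : ℝ → ℂ) (hψ : ∀ lam : ℝ, ψhat lam = Cψ lam * Complex.ofReal (|lam| ^ α))
    (hψL2 : MemLp ψhat 2 volume)
    (CX : ℝ → ℝ) (hc : Continuous CX) (hnn : ∀ x, 0 ≤ CX x) (hb : ∃ M, ∀ x, CX x ≤ M)
    (h0 : 0 < CX 0)
    (σ : ℤ → ℝ)
    (hσ : ∀ j : ℤ, σ j =
      Real.sqrt (∫ lam : ℝ, ‖ψhat ((2 : ℝ) ^ j * lam)‖ ^ 2 * CX lam * |lam| ^ (β - 1))) :
    ∃ (J : ℤ → ℝ) (K : ℝ), 0 < K ∧ Tendsto J atTop (nhds K) ∧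
      ∀ᶠ j : ℤ in atTop,
        Real.log (σ j) = (-(j : ℝ) * β * Real.log 2 + Real.log (J j)) / 2 := by
  obtain ⟨Mψ, hMψ⟩ := hCψb
  obtain ⟨MX, hMX⟩ := hb
  have hMψ0 : 0 ≤ Mψ := le_trans (norm_nonneg _) (hMψ 0)
  have hMX0 : 0 ≤ MX := le_trans h0.le (hMX 0)
  set h : ℝ → ℝ := fun μ => ‖ψhat μ‖ ^ 2 * |μ| ^ (β - 1) with hh_def
  -- continuity of ψhat
  have hψc : Continuous ψhat := by
    have : Continuous fun lam : ℝ => Cψ lam * Complex.ofReal (|lam| ^ α) :=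
      hCψc.mul (Complex.continuous_ofReal.comp
        (continuous_abs.rpow_const fun x => Or.inr hα.le))
    exact this.congr fun x => (hψ x).symm
  have hrm : Measurable fun μ : ℝ => |μ| ^ (β - 1) := by
    have he : (fun μ : ℝ => |μ| ^ (β - 1)) =
        fun μ => if μ = 0 then 0 else Real.exp (Real.log |μ| * (β - 1)) := by
      funext μ
      by_cases hμ : μ = 0
      · simp [hμ, Real.zero_rpow (show β - 1 ≠ 0 by intro hc; rw [sub_eq_zero] at hc; linarith [hβ.2])]
      · simp [hμ, Real.rpow_def_of_pos (abs_pos.2 hμ)]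
    rw [he]
    exact Measurable.ite (measurableSet_singleton 0) measurable_const
      ((Real.measurable_log.comp measurable_abs).mul_const _).exp
  have hhm : Measurable h := ((hψc.norm.pow 2).measurable).mul hrm
  have hh0 : ∀ μ, 0 ≤ h μ := fun μ =>
    mul_nonneg (by positivity) (Real.rpow_nonneg (abs_nonneg _) _)
  -- integrability of h
  have hsq : Integrable (fun μ => ‖ψhat μ‖ ^ 2) := by
    have := hψL2.integrable_norm_rpow two_ne_zero ENNReal.ofNat_ne_top
    simpa [ENNReal.toReal_ofNat, Real.rpow_natCast] using this
  have houter : IntegrableOn h {x : ℝ | 1 ≤ |x|} := by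
    have hms : MeasurableSet {x : ℝ | 1 ≤ |x|} := measurableSet_le measurable_const measurable_abs
    refine Integrable.mono' hsq.integrableOn (hhm.aestronglyMeasurable.restrict) ?_
    rw [ae_restrict_iff' hms]
    filter_upwards with x hx
    rw [Real.norm_eq_abs, abs_of_nonneg (hh0 x)]
    calc h x ≤ ‖ψhat x‖ ^ 2 * 1 := by
          refine mul_le_mul_of_nonneg_left ?_ (by positivity)
          exact Real.rpow_le_one_of_one_le_of_nonpos hx (by linarith [hβ.2])
      _ = ‖ψhat x‖ ^ 2 := mul_one _
  -- the dominating even power near 0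
  set g : ℝ → ℝ := fun x => Mψ ^ 2 * |x| ^ (2 * α + β - 1) with hg_def
  have hge : ∀ x, g (-x) = g x := fun x => by simp [hg_def]
  have hbound : ∀ x : ℝ, x ≠ 0 → h x ≤ g x := by
    intro x hx
    have habs : 0 < |x| := abs_pos.2 hx
    have h1 : ‖ψhat x‖ ^ 2 = ‖Cψ x‖ ^ 2 * |x| ^ (2 * α) := by
      rw [hψ x, norm_mul, mul_pow, Complex.norm_real, Real.norm_eq_abs,
        abs_of_nonneg (Real.rpow_nonneg (abs_nonneg _) _), ← Real.rpow_natCast (|x| ^ α) 2,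
        ← Real.rpow_mul (abs_nonneg x)]
      norm_num [mul_comm]
    rw [hh_def]
    simp only
    rw [h1, hg_def]
    simp only
    rw [mul_assoc, ← Real.rpow_add habs]
    have : 2 * α + (β - 1) = 2 * α + β - 1 := by ring
    rw [this]
    exact mul_le_mul_of_nonneg_right
      (pow_le_pow_left₀ (norm_nonneg _) (hMψ x) 2)
      (Real.rpow_nonneg (abs_nonneg _) _)
  have hg01 : IntegrableOn g (Ioo (0:ℝ) 1) := by
    have hpow : IntegrableOn (fun x : ℝ => x ^ (2 * α + β - 1)) (Ioo (0:ℝ) 1) :=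
      (intervalIntegral.integrableOn_Ioo_rpow_iff one_pos).2 (by linarith [hβ.1])
    have hpow2 : IntegrableOn (fun x : ℝ => Mψ ^ 2 * x ^ (2 * α + β - 1)) (Ioo (0:ℝ) 1) :=
      hpow.const_mul _
    refine hpow2.congr_fun (fun x hx => ?_) measurableSet_Ioo
    simp [hg_def, abs_of_pos hx.1]
  have hgneg : IntegrableOn g (Ioo (-1:ℝ) 0) := by
    have := (MeasurePreserving.integrableOn_comp_preimage
      (Measure.measurePreserving_neg (volume : Measure ℝ))
      (Homeomorph.neg ℝ).measurableEmbedding).2 hg01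
    have hpre : (Neg.neg ⁻¹' Ioo (0:ℝ) 1) = Ioo (-1:ℝ) 0 := by
      ext x; simp [neg_lt, lt_neg, and_comm]
    rw [hpre] at this
    refine this.congr_fun (fun x _ => ?_) measurableSet_Ioo
    simp [Function.comp, hge x]
  have hIntOn : ∀ s : Set ℝ, MeasurableSet s → IntegrableOn g s → (∀ x ∈ s, x ≠ 0) →
      IntegrableOn h s := by
    intro s hms hgs hs0
    refine Integrable.mono' hgs (hhm.aestronglyMeasurable.restrict) ?_
    rw [ae_restrict_iff' hms]
    filter_upwards with x hx
    rw [Real.norm_eq_abs, abs_of_nonneg (hh0 x)]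
    exact hbound x (hs0 x hx)
  have hInt : Integrable h := by
    rw [← integrableOn_univ]
    have hcover : (univ : Set ℝ) ⊆ (Ioo (-1:ℝ) 0 ∪ Ioo (0:ℝ) 1 ∪ {x : ℝ | 1 ≤ |x|}) ∪ {0} := by
      intro x _
      rcases eq_or_ne x 0 with hx | hx
      · exact Or.inr (by simp [hx])
      rcases le_or_gt 1 |x| with hx1 | hx1
      · exact Or.inl (Or.inr hx1)
      · rcases hx.lt_or_gt with hneg | hpos
        · exact Or.inl (Or.inl (Or.inl ⟨by rw [abs_of_neg hneg] at hx1; linarith, hneg⟩))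
        · exact Or.inl (Or.inl (Or.inr ⟨hpos, by rwa [abs_of_pos hpos] at hx1⟩))
    refine IntegrableOn.mono_set ?_ hcover
    refine IntegrableOn.union (IntegrableOn.union (IntegrableOn.union ?_ ?_) houter) ?_
    · exact hIntOn _ measurableSet_Ioo hgneg (fun x hx => ne_of_lt hx.2)
    · exact hIntOn _ measurableSet_Ioo hg01 (fun x hx => ne_of_gt hx.1)
    · unfold IntegrableOn
      rw [Measure.restrict_eq_zero.mpr (measure_singleton 0)]
      exact integrable_zero_measure
  -- the rescaled integrals
  set J : ℤ → ℝ := fun j => ∫ μ : ℝ, h μ * CX ((2:ℝ) ^ (-j) * μ) with hJ_def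
  set K : ℝ := (∫ μ : ℝ, h μ) * CX 0 with hK_def
  -- positivity of ∫ h
  have hIntPos : 0 < ∫ μ : ℝ, h μ := by
    rw [integral_pos_iff_support_of_nonneg hh0 hInt]
    have hne : ∀ᶠ x in nhds (0:ℝ), Cψ x ≠ 0 := hCψc.continuousAt.eventually_ne hCψ0
    obtain ⟨ε, hε, hball⟩ := Metric.eventually_nhds_iff.1 hne
    have hsub : Ioo (0:ℝ) ε ⊆ Function.support h := by
      intro μ hμ
      have hμ0 : μ ≠ 0 := ne_of_gt hμ.1
      have hCne : Cψ μ ≠ 0 := hball (by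
        simp only [Real.dist_eq, sub_zero]
        rw [abs_of_pos hμ.1]; exact hμ.2)
      have hψne : ψhat μ ≠ 0 := by
        rw [hψ μ]
        exact mul_ne_zero hCne (by
          simp only [ne_eq, Complex.ofReal_eq_zero]
          exact ne_of_gt (Real.rpow_pos_of_pos (abs_pos.2 hμ0) _))
      have : 0 < h μ := mul_pos (pow_pos (norm_pos_iff.2 hψne) 2) (Real.rpow_pos_of_pos (abs_pos.2 hμ0) _)
      exact ne_of_gt this
    calc (0 : ENNReal) < ENNReal.ofReal ε := by simpa using hε
      _ = volume (Ioo (0:ℝ) ε) := by rw [Real.volume_Ioo, sub_zero]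
      _ ≤ volume (Function.support h) := measure_mono hsub
  have hKpos : 0 < K := mul_pos hIntPos h0
  -- dominated convergence
  have hJK : Tendsto J atTop (nhds K) := by
    have hlim : Tendsto J atTop (nhds (∫ μ : ℝ, h μ * CX 0)) := by
      refine tendsto_integral_filter_of_dominated_convergence (fun μ => h μ * MX)
        ?_ ?_ (hInt.mul_const _) ?_
      · filter_upwards with j
        exact (hhm.mul ((hc.measurable).comp (measurable_const_mul _))).aestronglyMeasurable
      · filter_upwards with j
        filter_upwards with μ
        rw [Real.norm_eq_abs, abs_of_nonneg (mul_nonneg (hh0 μ) (hnn _))]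
        exact mul_le_mul_of_nonneg_left (hMX _) (hh0 μ)
      · filter_upwards with μ
        have h2 : Tendsto (fun j : ℤ => (2:ℝ) ^ (-j)) atTop (nhds 0) := by
          have := two_zpow_tendsto.inv_tendsto_atTop
          simpa [zpow_neg, Pi.inv_def] using this
        have hmul : Tendsto (fun j : ℤ => (2:ℝ) ^ (-j) * μ) atTop (nhds 0) := by
          simpa using h2.mul_const μ
        exact ((hc.tendsto 0).comp hmul).const_mul (h μ)
    rw [hK_def, ← integral_mul_const]
    exact hlim
  refine ⟨J, K, hKpos, hJK, ?_⟩
  filter_upwards [hJK.eventually (eventually_gt_nhds hKpos)] with j hJpos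
  set a : ℝ := (2:ℝ) ^ j with ha_def
  have ha : 0 < a := zpow_pos two_pos j
  have key : (∫ lam : ℝ, ‖ψhat ((2:ℝ) ^ j * lam)‖ ^ 2 * CX lam * |lam| ^ (β - 1))
      = a ^ (-β) * J j := by
    have e1 : ∀ lam : ℝ, ‖ψhat ((2:ℝ) ^ j * lam)‖ ^ 2 * CX lam * |lam| ^ (β - 1)
        = a ^ ((1:ℝ) - β) * (h (a * lam) * CX ((2:ℝ) ^ (-j) * (a * lam))) := by
      intro lam
      have hinvmul : (2:ℝ) ^ (-j) * (a * lam) = lam := by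
        rw [ha_def, zpow_neg, inv_mul_cancel_left₀ (ne_of_gt ha)]
      rw [hinvmul, hh_def]
      simp only
      rw [abs_mul, abs_of_pos ha, Real.mul_rpow ha.le (abs_nonneg _)]
      rw [← ha_def]
      have hpowmul : a ^ ((1:ℝ) - β) * a ^ (β - 1) = 1 := by
        rw [← Real.rpow_add ha]
        norm_num
      calc ‖ψhat (a * lam)‖ ^ 2 * CX lam * |lam| ^ (β - 1)
          = (a ^ ((1:ℝ) - β) * a ^ (β - 1)) * (‖ψhat (a * lam)‖ ^ 2 * CX lam * |lam| ^ (β - 1)) := by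
            rw [hpowmul, one_mul]
        _ = a ^ ((1:ℝ) - β) * (‖ψhat (a * lam)‖ ^ 2 * (a ^ (β - 1) * |lam| ^ (β - 1)) * CX lam) := by
            ring
    simp_rw [e1]
    rw [MeasureTheory.integral_const_mul, Measure.integral_comp_mul_left
      (fun μ => h μ * CX ((2:ℝ) ^ (-j) * μ)) a]
    rw [abs_of_pos (inv_pos.2 ha), smul_eq_mul, ← mul_assoc]
    congr 1
    rw [← Real.rpow_neg_one a, ← Real.rpow_add ha]
    congr 1
    ring
  rw [hσ j, key, Real.log_sqrt (mul_nonneg (Real.rpow_nonneg ha.le _) hJpos.le),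
    Real.log_mul (ne_of_gt (Real.rpow_pos_of_pos ha _)) (ne_of_gt hJpos),
    Real.log_rpow ha, ha_def, Real.log_zpow]
  ring

/-- Corollary 1 of the paper (second part): for two long-range dependent spectral densities
`f_{X_p}(λ) = C_{X_p}(λ)|λ|^{β_p - 1}`, the scale-normalized difference of the logarithms of
the wavelet-coefficient standard deviations satisfies
`liminf_{j→∞} (1/j)|ln σ_{1,j} - ln σ_{2,j}| ≥ (ln 2 / 2)|β₁ - β₂|`. -/
theorem stmt8 (α β₁ β₂ : ℝ) (hα : 0 < α)
    (hβ₁ : β₁ ∈ Set.Ioo (0 : ℝ) 1) (hβ₂ : β₂ ∈ Set.Ioo (0 : ℝ) 1)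
    (Cψ : ℝ → ℂ) (hCψc : Continuous Cψ) (hCψb : ∃ M, ∀ x, ‖Cψ x‖ ≤ M) (hCψ0 : Cψ 0 ≠ 0)
    (ψhat : ℝ → ℂ) (hψ : ∀ lam : ℝ, ψhat lam = Cψ lam * Complex.ofReal (|lam| ^ α))
    (hψL2 : MemLp ψhat 2 volume)
    (CX₁ CX₂ : ℝ → ℝ) (h₁c : Continuous CX₁) (h₂c : Continuous CX₂)
    (h₁nn : ∀ x, 0 ≤ CX₁ x) (h₂nn : ∀ x, 0 ≤ CX₂ x)
    (h₁b : ∃ M, ∀ x, CX₁ x ≤ M) (h₂b : ∃ M, ∀ x, CX₂ x ≤ M)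
    (h₁0 : 0 < CX₁ 0) (h₂0 : 0 < CX₂ 0)
    (σ₁ σ₂ : ℤ → ℝ)
    (hσ₁ : ∀ j : ℤ, σ₁ j =
      Real.sqrt (∫ lam : ℝ, ‖ψhat ((2 : ℝ) ^ j * lam)‖ ^ 2 * CX₁ lam * |lam| ^ (β₁ - 1)))
    (hσ₂ : ∀ j : ℤ, σ₂ j =
      Real.sqrt (∫ lam : ℝ, ‖ψhat ((2 : ℝ) ^ j * lam)‖ ^ 2 * CX₂ lam * |lam| ^ (β₂ - 1))) :
    Real.log 2 / 2 * |β₁ - β₂| ≤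
      liminf (fun j : ℤ => ((j : ℝ))⁻¹ * |Real.log (σ₁ j) - Real.log (σ₂ j)|) atTop := by
  obtain ⟨J₁, K₁, hK₁, hJ₁t, hev₁⟩ :=
    aux_main α β₁ hα hβ₁ Cψ hCψc hCψb hCψ0 ψhat hψ hψL2 CX₁ h₁c h₁nn h₁b h₁0 σ₁ hσ₁
  obtain ⟨J₂, K₂, hK₂, hJ₂t, hev₂⟩ :=
    aux_main α β₂ hα hβ₂ Cψ hCψc hCψb hCψ0 ψhat hψ hψL2 CX₂ h₂c h₂nn h₂b h₂0 σ₂ hσ₂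
  set c : ℝ := (β₂ - β₁) * Real.log 2 / 2 with hc_def
  have hlog1 : Tendsto (fun j : ℤ => Real.log (J₁ j)) atTop (nhds (Real.log K₁)) :=
    ((Real.continuousAt_log hK₁.ne').tendsto).comp hJ₁t
  have hlog2 : Tendsto (fun j : ℤ => Real.log (J₂ j)) atTop (nhds (Real.log K₂)) :=
    ((Real.continuousAt_log hK₂.ne').tendsto).comp hJ₂t
  have hinv : Tendsto (fun j : ℤ => ((2 * (j : ℝ)))⁻¹) atTop (nhds 0) := by
    apply Tendsto.inv_tendsto_atTop
    exact (tendsto_intCast_atTop_atTop (R := ℝ)).const_mul_atTop two_pos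
  have hG : Tendsto (fun j : ℤ =>
      c + (Real.log (J₁ j) - Real.log (J₂ j)) * (2 * (j : ℝ))⁻¹) atTop (nhds c) := by
    have := tendsto_const_nhds (x := c) (f := atTop (α := ℤ)) |>.add
      (((hlog1.sub hlog2).mul hinv))
    simpa using this
  have hGabs : Tendsto (fun j : ℤ =>
      |c + (Real.log (J₁ j) - Real.log (J₂ j)) * (2 * (j : ℝ))⁻¹|) atTop (nhds |c|) := hG.abs
  have hev : ∀ᶠ j : ℤ in atTop,
      ((j : ℝ))⁻¹ * |Real.log (σ₁ j) - Real.log (σ₂ j)|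
        = |c + (Real.log (J₁ j) - Real.log (J₂ j)) * (2 * (j : ℝ))⁻¹| := by
    filter_upwards [hev₁, hev₂, eventually_ge_atTop (1 : ℤ)] with j h1 h2 hj
    have hj0 : (0 : ℝ) < (j : ℝ) := by exact_mod_cast (by omega : (0:ℤ) < j)
    rw [h1, h2]
    rw [← abs_of_pos (inv_pos.2 hj0), ← abs_mul]
    congr 1
    field_simp
    ring
  have hT : Tendsto (fun j : ℤ => ((j : ℝ))⁻¹ * |Real.log (σ₁ j) - Real.log (σ₂ j)|)
      atTop (nhds |c|) := hGabs.congr' (EventuallyEq.symm hev)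
  rw [hT.liminf_eq]
  have : |c| = Real.log 2 / 2 * |β₁ - β₂| := by
    rw [hc_def, abs_div, abs_mul, abs_of_nonneg (Real.log_nonneg one_le_two),
      abs_sub_comm β₂ β₁]
    norm_num
    ring
  exact le_of_eq this.symm
end

section
/- For every integer n ≥ 1, 2^{2n} (n!)² ≤ √(4πn) · (2n)!. Equivalently, the central binomial coefficient satisfies binom(2n, n) ≥ 4^n / (2√(πn)). -/
open Real

lemma sqrt_pi_le_stirlingSeq (k : ℕ) : Real.sqrt Real.pi ≤ Stirling.stirlingSeq (k + 1) := by
  have h := Stirling.stirlingSeq'_antitone.le_of_tendsto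
    ((Filter.tendsto_add_atTop_iff_nat 1).mpr Stirling.tendsto_stirlingSeq_sqrt_pi) k
  simpa using h

lemma stirlingSeq_le_one (k : ℕ) (hk : 1 ≤ k) : Stirling.stirlingSeq k ≤ Real.exp 1 / Real.sqrt 2 := by
  obtain ⟨m, rfl⟩ := Nat.exists_eq_add_of_le hk
  have h := Stirling.stirlingSeq'_antitone (Nat.zero_le m)
  simpa [Stirling.stirlingSeq_one, Nat.add_comm] using h

lemma fact_eq (m : ℕ) (hm : 1 ≤ m) :
    (Nat.factorial m : ℝ) = Stirling.stirlingSeq m * (Real.sqrt (2 * m) * ((m : ℝ) / Real.exp 1) ^ m) := by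
  have hm0 : (0 : ℝ) < m := by exact_mod_cast hm
  have hden : Real.sqrt (2 * m) * ((m : ℝ) / Real.exp 1) ^ m ≠ 0 := by positivity
  rw [Stirling.stirlingSeq]
  field_simp

/-- A Stirling-type bound: `2^{2n} (n!)² ≤ √(4πn) (2n)!` for every `n ≥ 1`, equivalently the
central binomial coefficient satisfies `binom(2n,n) ≥ 4^n / (2√(πn))`. -/
theorem stmt10 (n : ℕ) (hn : 1 ≤ n) :
    (2 : ℝ) ^ (2 * n) * (Nat.factorial n : ℝ) ^ 2 ≤
      Real.sqrt (4 * Real.pi * n) * (Nat.factorial (2 * n) : ℝ) := by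
  have hn0 : (0 : ℝ) < n := by exact_mod_cast hn
  set s := Stirling.stirlingSeq
  have h2n : 1 ≤ 2 * n := by omega
  have hf1 := fact_eq n hn
  have hf2 := fact_eq (2 * n) h2n
  -- key inequality on stirling sequences
  have hs2 : Real.sqrt Real.pi ≤ s (2 * n) := by
    obtain ⟨k, hk⟩ : ∃ k, 2 * n = k + 1 := ⟨2 * n - 1, by omega⟩
    rw [hk]; exact sqrt_pi_le_stirlingSeq k
  have hs1 : s n ≤ Real.exp 1 / Real.sqrt 2 := stirlingSeq_le_one n hn
  have hsn_pos : 0 < s n := by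
    obtain ⟨k, hk⟩ : ∃ k, n = k + 1 := ⟨n - 1, by omega⟩
    rw [hk]; exact Stirling.stirlingSeq'_pos k
  have hpi : 0 < Real.pi := Real.pi_pos
  have key : s n ^ 2 ≤ 2 * Real.sqrt Real.pi * s (2 * n) := by
    have h1 : s n ^ 2 ≤ (Real.exp 1 / Real.sqrt 2) ^ 2 := by
      apply pow_le_pow_left₀ hsn_pos.le hs1
    have h2 : (Real.exp 1 / Real.sqrt 2) ^ 2 = Real.exp 1 ^ 2 / 2 := by
      rw [div_pow, Real.sq_sqrt (by norm_num : (2:ℝ) ≥ 0)]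
    have h3 : Real.exp 1 ^ 2 / 2 ≤ 2 * Real.pi := by
      have he : Real.exp 1 < 2.7182818286 := Real.exp_one_lt_d9
      have hp : 3.141592 < Real.pi := Real.pi_gt_d6
      nlinarith [Real.exp_pos 1]
    have h4 : 2 * Real.pi ≤ 2 * Real.sqrt Real.pi * s (2 * n) := by
      have : Real.sqrt Real.pi * Real.sqrt Real.pi = Real.pi := Real.mul_self_sqrt hpi.le
      nlinarith [Real.sqrt_pos.mpr hpi, hs2]
    linarith
  -- rewrite factorials
  rw [hf1, hf2]
  have hsq2n : Real.sqrt (2 * (n:ℝ)) ^ 2 = 2 * n := Real.sq_sqrt (by positivity)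
  have hsqprod : Real.sqrt (4 * Real.pi * n) * Real.sqrt (2 * ((2*n : ℕ) : ℝ)) =
      4 * n * Real.sqrt Real.pi := by
    push_cast
    rw [← Real.sqrt_mul (by positivity)]
    have : 4 * Real.pi * (n:ℝ) * (2 * (2 * n)) = (4 * n) ^ 2 * Real.pi := by ring
    rw [this, Real.sqrt_mul (by positivity), Real.sqrt_sq (by positivity)]
  have hpow : (((2*n:ℕ):ℝ) / Real.exp 1) ^ (2*n) = 2 ^ (2*n) * (((n:ℝ) / Real.exp 1) ^ n) ^ 2 := by
    push_cast
    rw [← pow_mul, mul_comm n 2]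
    rw [show (2 * (n:ℝ)) / Real.exp 1 = 2 * ((n:ℝ)/Real.exp 1) by ring, mul_pow]
  have hP : (0:ℝ) < ((n:ℝ) / Real.exp 1) ^ n := by positivity
  have h2pow : (0:ℝ) < (2:ℝ) ^ (2*n) := by positivity
  -- reduce
  calc (2:ℝ) ^ (2*n) * (s n * (Real.sqrt (2*n) * ((n:ℝ)/Real.exp 1)^n))^2
      = (s n ^ 2 * (2 * n)) * ((2:ℝ)^(2*n) * (((n:ℝ)/Real.exp 1)^n)^2) := by
        rw [mul_pow, mul_pow, hsq2n]; ring
    _ ≤ ((2 * Real.sqrt Real.pi * s (2*n)) * (2 * n)) * ((2:ℝ)^(2*n) * (((n:ℝ)/Real.exp 1)^n)^2) := by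
        apply mul_le_mul_of_nonneg_right _ (by positivity)
        apply mul_le_mul_of_nonneg_right key (by positivity)
    _ = Real.sqrt (4 * Real.pi * n) * (s (2*n) * (Real.sqrt (2 * ((2*n:ℕ):ℝ)) * (((2*n:ℕ):ℝ)/Real.exp 1)^(2*n))) := by
        rw [hpow]
        linear_combination (- s (2*n) * ((2:ℝ)^(2*n) * (((n:ℝ)/Real.exp 1)^n)^2)) * hsqprod
end

section
/- For all integers ℓ, ℓ' ≥ 1, Σ_{r=1}^{min(ℓ, ℓ')} (r/ℓ') · √( binom(ℓ, r) · binom(ℓ', r) · binom(ℓ + ℓ' − 2r, ℓ − r) ) ≤ 3^{(ℓ + ℓ')/2}. -/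
open Finset Real

lemma choose_le_two_pow' (n k : ℕ) : n.choose k ≤ 2 ^ n := by
  rcases le_or_gt k n with h | h
  · calc n.choose k ≤ ∑ i ∈ Finset.range (n + 1), n.choose i :=
        Finset.single_le_sum (fun i _ => Nat.zero_le _)
          (Finset.mem_range.mpr (Nat.lt_succ_of_le h))
      _ = 2 ^ n := Nat.sum_range_choose n
  · simp [Nat.choose_eq_zero_of_lt h]

lemma sum_choose_half_le (n m : ℕ) (hm : m ≤ n) :
    ∑ r ∈ Finset.Icc 1 m, (n.choose r : ℝ) * (1 / 2) ^ r ≤ (3 / 2) ^ n := by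
  have h1 : ∑ r ∈ Finset.Icc 1 m, (n.choose r : ℝ) * (1 / 2) ^ r ≤
      ∑ r ∈ Finset.range (n + 1), (n.choose r : ℝ) * (1 / 2) ^ r := by
    apply Finset.sum_le_sum_of_subset_of_nonneg
    · intro r hr
      simp only [Finset.mem_Icc] at hr
      exact Finset.mem_range.mpr (Nat.lt_succ_of_le (hr.2.trans hm))
    · intro r _ _; positivity
  have h2 : ((1 : ℝ) / 2 + 1) ^ n =
      ∑ r ∈ Finset.range (n + 1), ((1 : ℝ) / 2) ^ r * 1 ^ (n - r) * n.choose r :=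
    add_pow _ _ _
  calc ∑ r ∈ Finset.Icc 1 m, (n.choose r : ℝ) * (1 / 2) ^ r
      ≤ ∑ r ∈ Finset.range (n + 1), (n.choose r : ℝ) * (1 / 2) ^ r := h1
    _ = ((1 : ℝ) / 2 + 1) ^ n := by rw [h2]; apply Finset.sum_congr rfl; intro r _; ring
    _ = (3 / 2) ^ n := by norm_num

/-- The bound `Θ₂(ℓ, ℓ') ≤ 3^{ℓ/2} 3^{ℓ'/2}` from the proof of Proposition 1:
`∑_{r=1}^{ℓ ∧ ℓ'} (r/ℓ') √(binom(ℓ,r) binom(ℓ',r) binom(ℓ+ℓ'-2r, ℓ-r)) ≤ 3^{(ℓ+ℓ')/2}`. -/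
theorem stmt13 (ℓ ℓ' : ℕ) (hℓ : 1 ≤ ℓ) (hℓ' : 1 ≤ ℓ') :
    ∑ r ∈ Finset.Icc 1 (min ℓ ℓ'),
      ((r : ℝ) / (ℓ' : ℝ)) *
        Real.sqrt ((ℓ.choose r : ℝ) * (ℓ'.choose r : ℝ) *
          ((ℓ + ℓ' - 2 * r).choose (ℓ - r) : ℝ)) ≤
      (3 : ℝ) ^ (((ℓ : ℝ) + (ℓ' : ℝ)) / 2) := by
  set S := Finset.Icc 1 (min ℓ ℓ') with hS
  set F : ℕ → ℝ := fun r => (ℓ.choose r : ℝ) * (1 / 2) ^ r * 2 ^ ℓ with hF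
  set G : ℕ → ℝ := fun r => (ℓ'.choose r : ℝ) * (1 / 2) ^ r * 2 ^ ℓ' with hG
  have hFnn : ∀ r, 0 ≤ F r := fun r => by positivity
  have hGnn : ∀ r, 0 ≤ G r := fun r => by positivity
  -- pointwise bound
  have step1 : ∑ r ∈ S, ((r : ℝ) / (ℓ' : ℝ)) *
      Real.sqrt ((ℓ.choose r : ℝ) * (ℓ'.choose r : ℝ) *
        ((ℓ + ℓ' - 2 * r).choose (ℓ - r) : ℝ)) ≤
      ∑ r ∈ S, Real.sqrt (F r) * Real.sqrt (G r) := by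
    apply Finset.sum_le_sum
    intro r hr
    simp only [hS, Finset.mem_Icc] at hr
    have hrℓ : r ≤ ℓ := hr.2.trans (min_le_left _ _)
    have hrℓ' : r ≤ ℓ' := hr.2.trans (min_le_right _ _)
    have hfrac : (r : ℝ) / (ℓ' : ℝ) ≤ 1 := by
      rw [div_le_one (by positivity : (0:ℝ) < (ℓ' : ℝ))]
      exact_mod_cast hrℓ'
    have hd : ((ℓ + ℓ' - 2 * r).choose (ℓ - r) : ℝ) ≤ (1 / 2) ^ r * (1 / 2) ^ r * 2 ^ ℓ * 2 ^ ℓ' := by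
      have h2r : 2 * r ≤ ℓ + ℓ' := by omega
      have hnat : (ℓ + ℓ' - 2 * r).choose (ℓ - r) ≤ 2 ^ (ℓ + ℓ' - 2 * r) :=
        choose_le_two_pow' _ _
      have hcast : ((2 : ℕ) ^ (ℓ + ℓ' - 2 * r) : ℝ) = (1 / 2) ^ r * (1 / 2) ^ r * 2 ^ ℓ * 2 ^ ℓ' := by
        push_cast
        rw [show (1 / 2 : ℝ) = 2⁻¹ by norm_num, ← pow_add, inv_pow, inv_mul_eq_div,
          div_mul_eq_mul_div, eq_div_iff (by positivity),
          ← pow_add, ← pow_add]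
        congr 1
        omega
      calc ((ℓ + ℓ' - 2 * r).choose (ℓ - r) : ℝ) ≤ ((2 : ℕ) ^ (ℓ + ℓ' - 2 * r) : ℝ) := by
            exact_mod_cast hnat
        _ = _ := hcast
    calc ((r : ℝ) / (ℓ' : ℝ)) * Real.sqrt ((ℓ.choose r : ℝ) * (ℓ'.choose r : ℝ) *
          ((ℓ + ℓ' - 2 * r).choose (ℓ - r) : ℝ))
        ≤ 1 * Real.sqrt ((ℓ.choose r : ℝ) * (ℓ'.choose r : ℝ) *
          ((ℓ + ℓ' - 2 * r).choose (ℓ - r) : ℝ)) := by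
          apply mul_le_mul_of_nonneg_right hfrac (Real.sqrt_nonneg _)
      _ = Real.sqrt ((ℓ.choose r : ℝ) * (ℓ'.choose r : ℝ) *
          ((ℓ + ℓ' - 2 * r).choose (ℓ - r) : ℝ)) := one_mul _
      _ ≤ Real.sqrt (F r * G r) := by
          apply Real.sqrt_le_sqrt
          have hb : (0:ℝ) ≤ (ℓ.choose r : ℝ) * (ℓ'.choose r : ℝ) := by positivity
          calc (ℓ.choose r : ℝ) * (ℓ'.choose r : ℝ) * ((ℓ + ℓ' - 2 * r).choose (ℓ - r) : ℝ)
              ≤ (ℓ.choose r : ℝ) * (ℓ'.choose r : ℝ) *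
                ((1 / 2) ^ r * (1 / 2) ^ r * 2 ^ ℓ * 2 ^ ℓ') :=
                mul_le_mul_of_nonneg_left hd hb
            _ = F r * G r := by simp only [hF, hG]; ring
      _ = Real.sqrt (F r) * Real.sqrt (G r) := Real.sqrt_mul (hFnn r) _
  -- Cauchy–Schwarz
  have step2 : ∑ r ∈ S, Real.sqrt (F r) * Real.sqrt (G r) ≤
      Real.sqrt (∑ r ∈ S, F r) * Real.sqrt (∑ r ∈ S, G r) :=
    Real.sum_sqrt_mul_sqrt_le S hFnn hGnn
  -- bound the two sums by 3^ℓ and 3^ℓ'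
  have hsumF : ∑ r ∈ S, F r ≤ 3 ^ ℓ := by
    have := sum_choose_half_le ℓ (min ℓ ℓ') (min_le_left _ _)
    calc ∑ r ∈ S, F r = (∑ r ∈ S, (ℓ.choose r : ℝ) * (1 / 2) ^ r) * 2 ^ ℓ := by
          rw [← Finset.sum_mul]
      _ ≤ (3 / 2) ^ ℓ * 2 ^ ℓ := by
          apply mul_le_mul_of_nonneg_right this (by positivity)
      _ = 3 ^ ℓ := by rw [← mul_pow]; norm_num
  have hsumG : ∑ r ∈ S, G r ≤ 3 ^ ℓ' := by
    have := sum_choose_half_le ℓ' (min ℓ ℓ') (min_le_right _ _)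
    calc ∑ r ∈ S, G r = (∑ r ∈ S, (ℓ'.choose r : ℝ) * (1 / 2) ^ r) * 2 ^ ℓ' := by
          rw [← Finset.sum_mul]
      _ ≤ (3 / 2) ^ ℓ' * 2 ^ ℓ' := by
          apply mul_le_mul_of_nonneg_right this (by positivity)
      _ = 3 ^ ℓ' := by rw [← mul_pow]; norm_num
  have step3 : Real.sqrt (∑ r ∈ S, F r) * Real.sqrt (∑ r ∈ S, G r) ≤
      Real.sqrt ((3:ℝ) ^ ℓ) * Real.sqrt ((3:ℝ) ^ ℓ') := by
    apply mul_le_mul (Real.sqrt_le_sqrt hsumF) (Real.sqrt_le_sqrt hsumG)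
      (Real.sqrt_nonneg _) (Real.sqrt_nonneg _)
  have hfinal : Real.sqrt ((3:ℝ) ^ ℓ) * Real.sqrt ((3:ℝ) ^ ℓ') =
      (3 : ℝ) ^ (((ℓ : ℝ) + (ℓ' : ℝ)) / 2) := by
    rw [← Real.sqrt_mul (by positivity), ← pow_add, Real.sqrt_eq_rpow,
      ← Real.rpow_natCast (3:ℝ) (ℓ + ℓ'), ← Real.rpow_mul (by norm_num)]
    push_cast
    ring_nf
  linarith [step1, step2, step3, hfinal.le, hfinal.ge]
end

section
/- Let d ≥ 1 and let F and N be ℝ^d-valued random vectors. Define the class H₂ of test functions as the set of continuously differentiable h : ℝ^d → ℝ with sup_x |h(x)| ≤ 1, max_{1≤m≤d} sup_x |∂h/∂x_m(x)| ≤ 1, and max_{1≤m≤d} sup_{x≠y} |∂h/∂x_m(x) − ∂h/∂x_m(y)|/‖x−y‖ ≤ 1, and set d_{H₂}(F, N) = sup_{h ∈ H₂} |E[h(F)] − E[h(N)]|. Suppose there is a constant c > 0 such that for all z ∈ ℝ^d and all δ > 0, P(N ∈ Π_{k=1}^d (−∞, z_k + δ]) − P(N ∈ Π_{k=1}^d (−∞,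 z_k]) ≤ c·δ. Then for every δ > 0, sup_{z ∈ ℝ^d} | P(F ∈ Π_{k=1}^d (−∞, z_k]) − P(N ∈ Π_{k=1}^d (−∞, z_k]) | ≤ (1 + 4/δ²) · d_{H₂}(F, N) + c·δ. -/
open MeasureTheory ProbabilityTheory

/-- The class `H₂` of test functions on `ℝ^d`: continuously differentiable functions bounded
by `1`, with all partial derivatives bounded by `1` and `1`-Lipschitz. -/
def memH₂ {d : ℕ} (h : EuclideanSpace ℝ (Fin d) → ℝ) : Prop :=
  ContDiff ℝ 1 h ∧ (∀ x, |h x| ≤ 1) ∧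
    (∀ (m : Fin d) (x), |fderiv ℝ h x (EuclideanSpace.single m 1)| ≤ 1) ∧
    (∀ (m : Fin d) (x y), |fderiv ℝ h x (EuclideanSpace.single m 1) -
      fderiv ℝ h y (EuclideanSpace.single m 1)| ≤ ‖x - y‖)

/-- The smooth Wasserstein distance `d_{H₂}` between the laws of two random vectors `F, N`:
the supremum over `h ∈ H₂` of `|E[h(F)] - E[h(N)]|`. -/
noncomputable def dH₂ {Ω : Type*} [MeasureSpace Ω] {d : ℕ}
    (F N : Ω → EuclideanSpace ℝ (Fin d)) : ℝ :=
  sSup {r : ℝ | ∃ h : EuclideanSpace ℝ (Fin d) → ℝ, memH₂ h ∧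
    r = |(∫ ω, h (F ω)) - ∫ ω, h (N ω)|}

noncomputable section
namespace S16
open MeasureTheory intervalIntegral

def mfun (δ t : ℝ) : ℝ := if t ≤ δ^2/4 then 1 else max (δ - Real.sqrt t) 0 / Real.sqrt (max t (δ^2/4))

def gfun (δ r : ℝ) : ℝ := min r (max (δ - r) 0)

def Ifun (δ t : ℝ) : ℝ := ∫ τ in (0:ℝ)..t, mfun δ τ

def Gfun (δ t : ℝ) : ℝ := 1 - (2/δ^2) * Ifun δ t

open MeasureTheory intervalIntegral



variable {δ : ℝ}

lemma sqrt_quarter (hδ : 0 < δ) : Real.sqrt (δ^2/4) = δ/2 := by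
  rw [show δ^2/4 = (δ/2)^2 by ring, Real.sqrt_sq (by linarith)]

lemma mfun_cont (hδ : 0 < δ) : Continuous (mfun δ) := by
  apply Continuous.if_le
  · exact continuous_const
  · apply Continuous.div
    · exact (continuous_const.sub Real.continuous_sqrt).max continuous_const
    · exact (continuous_id.max continuous_const).sqrt
    · intro t
      have h1 : (0:ℝ) < δ^2/4 := by positivity
      have h2 : δ^2/4 ≤ max t (δ^2/4) := le_max_right _ _
      exact ne_of_gt (Real.sqrt_pos.2 (lt_of_lt_of_le h1 h2))
  · exact continuous_id
  · exact continuous_const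
  · intro t ht
    subst ht
    have h2 : Real.sqrt (max (δ^2/4) (δ^2/4)) = δ/2 := by rw [max_self, sqrt_quarter hδ]
    rw [h2, sqrt_quarter hδ, max_eq_left (by linarith)]
    field_simp
    ring

lemma mfun_nonneg (t : ℝ) : 0 ≤ mfun δ t := by
  unfold mfun
  split
  · norm_num
  · positivity

lemma mfun_le_one (hδ : 0 < δ) (t : ℝ) : mfun δ t ≤ 1 := by
  unfold mfun
  split
  · exact le_refl _
  · rename_i h
    push_neg at h
    have h1 : (0:ℝ) < δ^2/4 := by positivity
    have htpos : 0 < t := lt_trans h1 h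
    rw [max_eq_left h.le, div_le_one (Real.sqrt_pos.2 htpos)]
    have h2 : δ/2 < Real.sqrt t := by
      have := Real.sqrt_lt_sqrt h1.le h
      rwa [sqrt_quarter hδ] at this
    exact max_le (by linarith) (Real.sqrt_nonneg t)

lemma mfun_eq_zero (hδ : 0 < δ) {t : ℝ} (ht : δ^2 ≤ t) : mfun δ t = 0 := by
  have h1 : (0:ℝ) < δ^2/4 := by positivity
  have h2 : δ^2/4 < t := lt_of_lt_of_le (by linarith) ht
  unfold mfun
  rw [if_neg (not_le.2 h2)]
  have : Real.sqrt (δ^2) ≤ Real.sqrt t := Real.sqrt_le_sqrt ht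
  rw [Real.sqrt_sq hδ.le] at this
  rw [max_eq_right (by linarith)]
  simp

lemma mfun_mul_self (hδ : 0 < δ) {r : ℝ} (hr : 0 < r) : r * mfun δ (r^2) = gfun δ r := by
  have hsq : Real.sqrt (r^2) = r := Real.sqrt_sq hr.le
  unfold mfun gfun
  by_cases h : r^2 ≤ δ^2/4
  · rw [if_pos h, mul_one]
    have hr2 : r ≤ δ/2 := by
      have := Real.sqrt_le_sqrt h
      rwa [hsq, sqrt_quarter hδ] at this
    rw [min_eq_left]
    exact le_max_of_le_left (by linarith)
  · rw [if_neg h]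
    push_neg at h
    have hr2 : δ/2 < r := by
      have := Real.sqrt_lt_sqrt (by positivity) h
      rwa [hsq, sqrt_quarter hδ] at this
    rw [max_eq_left (le_of_lt h), hsq]
    rw [min_eq_right]
    · field_simp
    · exact max_le (by linarith) hr.le

lemma gfun_nonneg {r : ℝ} (hr : 0 ≤ r) : 0 ≤ gfun δ r :=
  le_min hr (le_max_right _ _)

lemma gfun_le (r : ℝ) : gfun δ r ≤ r := min_le_left _ _

lemma gfun_le_half (hδ : 0 < δ) (r : ℝ) : gfun δ r ≤ δ/2 := by
  unfold gfun
  rcases le_total r (δ/2) with h | h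
  · exact le_trans (min_le_left _ _) h
  · exact le_trans (min_le_right _ _) (max_le (by linarith) (by linarith))

lemma gfun_lipschitz (r s : ℝ) : |gfun δ r - gfun δ s| ≤ |r - s| := by
  unfold gfun
  have h1 : |min r (max (δ - r) 0) - min s (max (δ - s) 0)| ≤
      max |r - s| |max (δ - r) 0 - max (δ - s) 0| := abs_min_sub_min_le_max _ _ _ _
  refine le_trans h1 (max_le (le_refl _) ?_)
  have h2 : |max (δ - r) 0 - max (δ - s) 0| ≤ |(δ - r) - (δ - s)| := abs_max_sub_max_le_abs _ _ _
  calc |max (δ - r) 0 - max (δ - s) 0| ≤ |(δ - r) - (δ - s)| := h2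
    _ = |s - r| := by ring_nf
    _ = |r - s| := abs_sub_comm _ _




lemma Ifun_first (hδ : 0 < δ) : (∫ τ in (0:ℝ)..(δ^2/4), mfun δ τ) = δ^2/4 := by
  have : ∀ τ ∈ Set.uIcc (0:ℝ) (δ^2/4), mfun δ τ = 1 := by
    intro τ hτ
    rw [Set.uIcc_of_le (by positivity)] at hτ
    exact if_pos hτ.2
  rw [intervalIntegral.integral_congr this]
  simp

lemma Ifun_second (hδ : 0 < δ) : (∫ τ in (δ^2/4)..(δ^2), mfun δ τ) = δ^2/4 := by
  have hle : δ^2/4 ≤ δ^2 := by nlinarith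
  have heq : ∀ τ ∈ Set.uIcc (δ^2/4) (δ^2), mfun δ τ = δ / Real.sqrt τ - 1 := by
    intro τ hτ
    rw [Set.uIcc_of_le hle] at hτ
    obtain ⟨h1, h2⟩ := hτ
    have hτpos : 0 < τ := lt_of_lt_of_le (by positivity) h1
    have hs1 : δ/2 ≤ Real.sqrt τ := by
      have := Real.sqrt_le_sqrt h1
      rwa [sqrt_quarter hδ] at this
    have hs2 : Real.sqrt τ ≤ δ := by
      have := Real.sqrt_le_sqrt h2
      rwa [Real.sqrt_sq hδ.le] at this
    have hspos : 0 < Real.sqrt τ := by linarith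
    unfold mfun
    by_cases h : τ ≤ δ^2/4
    · have : τ = δ^2/4 := le_antisymm h h1
      subst this
      rw [if_pos le_rfl, sqrt_quarter hδ]
      field_simp
      norm_num
    · rw [if_neg h]
      push_neg at h
      rw [max_eq_left h.le, max_eq_left (by linarith)]
      field_simp
  rw [intervalIntegral.integral_congr heq]
  have hderiv : ∀ τ ∈ Set.uIcc (δ^2/4) (δ^2),
      HasDerivAt (fun t => 2*δ*Real.sqrt t - t) (δ / Real.sqrt τ - 1) τ := by
    intro τ hτ
    rw [Set.uIcc_of_le hle] at hτ
    have hτpos : 0 < τ := lt_of_lt_of_le (by positivity) hτ.1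
    have h1 := (Real.hasDerivAt_sqrt (ne_of_gt hτpos)).const_mul (2*δ)
    have h2 := h1.sub (hasDerivAt_id τ)
    refine h2.congr_deriv ?_
    have : Real.sqrt τ ≠ 0 := ne_of_gt (Real.sqrt_pos.2 hτpos)
    field_simp
  have hint : IntervalIntegrable (fun τ => δ / Real.sqrt τ - 1) MeasureTheory.volume (δ^2/4) (δ^2) := by
    apply ContinuousOn.intervalIntegrable
    apply ContinuousOn.sub _ continuousOn_const
    apply ContinuousOn.div continuousOn_const (Real.continuous_sqrt.continuousOn)
    intro τ hτ
    rw [Set.uIcc_of_le hle] at hτ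
    have hτpos : 0 < τ := lt_of_lt_of_le (by positivity) hτ.1
    exact ne_of_gt (Real.sqrt_pos.2 hτpos)
  rw [intervalIntegral.integral_eq_sub_of_hasDerivAt hderiv hint]
  rw [Real.sqrt_sq hδ.le, sqrt_quarter hδ]
  ring

lemma Ifun_delta (hδ : 0 < δ) : Ifun δ (δ^2) = δ^2/2 := by
  unfold Ifun
  rw [← intervalIntegral.integral_add_adjacent_intervals
    (a := (0:ℝ)) (b := δ^2/4) (c := δ^2)
    ((mfun_cont hδ).intervalIntegrable _ _) ((mfun_cont hδ).intervalIntegrable _ _),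
    Ifun_first hδ, Ifun_second hδ]
  ring

lemma Ifun_of_ge (hδ : 0 < δ) {t : ℝ} (ht : δ^2 ≤ t) : Ifun δ t = δ^2/2 := by
  unfold Ifun
  rw [← intervalIntegral.integral_add_adjacent_intervals
    (a := (0:ℝ)) (b := δ^2) (c := t)
    ((mfun_cont hδ).intervalIntegrable _ _) ((mfun_cont hδ).intervalIntegrable _ _)]
  have h0 : (∫ τ in (δ^2)..t, mfun δ τ) = 0 := by
    have : ∀ τ ∈ Set.uIcc (δ^2) t, mfun δ τ = 0 := by
      intro τ hτ
      rw [Set.uIcc_of_le ht] at hτ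
      exact mfun_eq_zero hδ hτ.1
    rw [intervalIntegral.integral_congr this]
    simp
  rw [h0, show (∫ τ in (0:ℝ)..(δ^2), mfun δ τ) = δ^2/2 from Ifun_delta hδ]
  ring

lemma Ifun_nonneg (hδ : 0 < δ) {t : ℝ} (ht : 0 ≤ t) : 0 ≤ Ifun δ t :=
  intervalIntegral.integral_nonneg ht (fun τ _ => mfun_nonneg τ)

lemma Ifun_le (hδ : 0 < δ) {t : ℝ} (ht : 0 ≤ t) : Ifun δ t ≤ δ^2/2 := by
  rcases le_total t (δ^2) with h | h
  · have := intervalIntegral.integral_mono_interval (μ := MeasureTheory.volume) (a := (0:ℝ)) (b := t) (c := (0:ℝ)) (d := δ^2)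
      le_rfl ht h (Filter.Eventually.of_forall (fun τ => mfun_nonneg τ))
      ((mfun_cont hδ).intervalIntegrable _ _)
    rw [show (∫ τ in (0:ℝ)..(δ^2), mfun δ τ) = δ^2/2 from Ifun_delta hδ] at this
    exact this
  · exact le_of_eq (Ifun_of_ge hδ h)


lemma Gfun_hasDerivAt (hδ : 0 < δ) (t : ℝ) :
    HasDerivAt (Gfun δ) (-(2/δ^2) * mfun δ t) t := by
  have h1 := ((mfun_cont hδ).integral_hasStrictDerivAt 0 t).hasDerivAt
  have h2 := (h1.const_mul (2/δ^2)).const_sub 1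
  refine h2.congr_deriv ?_
  ring

lemma Gfun_zero (hδ : 0 < δ) : Gfun δ 0 = 1 := by
  unfold Gfun Ifun
  simp

lemma Gfun_of_ge (hδ : 0 < δ) {t : ℝ} (ht : δ^2 ≤ t) : Gfun δ t = 0 := by
  unfold Gfun
  rw [Ifun_of_ge hδ ht]
  field_simp
  norm_num

lemma Gfun_nonneg (hδ : 0 < δ) {t : ℝ} (ht : 0 ≤ t) : 0 ≤ Gfun δ t := by
  unfold Gfun
  have h1 := Ifun_le hδ ht
  have h2 : (2/δ^2) * Ifun δ t ≤ (2/δ^2) * (δ^2/2) := by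
    apply mul_le_mul_of_nonneg_left h1 (by positivity)
  have : (2/δ^2) * (δ^2/2) = 1 := by field_simp
  linarith

lemma Gfun_le_one (hδ : 0 < δ) {t : ℝ} (ht : 0 ≤ t) : Gfun δ t ≤ 1 := by
  unfold Gfun
  have h1 := Ifun_nonneg hδ ht
  have h2 : 0 ≤ (2/δ^2) * Ifun δ t := mul_nonneg (by positivity) h1
  linarith


variable {d : ℕ}

local notation "E" => EuclideanSpace ℝ (Fin d)

/-- the radial tent vector field is 1-Lipschitz -/
lemma radial_lipschitz (hδ : 0 < δ) (v w : E) :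
    ‖mfun δ (‖v‖^2) • v - mfun δ (‖w‖^2) • w‖ ≤ ‖v - w‖ := by
  rcases eq_or_ne v 0 with rfl | hv
  · simp only [norm_zero, smul_zero, zero_sub, norm_neg, zero_sub] at *
    rcases eq_or_ne w 0 with rfl | hw
    · simp
    · rw [norm_smul, Real.norm_eq_abs, abs_of_nonneg (mfun_nonneg _)]
      have hwn : 0 < ‖w‖ := norm_pos_iff.2 hw
      have := mfun_mul_self hδ hwn
      nlinarith [gfun_le (δ := δ) ‖w‖, mfun_nonneg (δ := δ) (‖w‖^2), norm_nonneg w]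
  · rcases eq_or_ne w 0 with rfl | hw
    · simp only [norm_zero, smul_zero, sub_zero]
      rw [norm_smul, Real.norm_eq_abs, abs_of_nonneg (mfun_nonneg _)]
      have hvn : 0 < ‖v‖ := norm_pos_iff.2 hv
      have := mfun_mul_self hδ hvn
      nlinarith [gfun_le (δ := δ) ‖v‖, mfun_nonneg (δ := δ) (‖v‖^2), norm_nonneg v]
    · have hvn : 0 < ‖v‖ := norm_pos_iff.2 hv
      have hwn : 0 < ‖w‖ := norm_pos_iff.2 hw
      set a := mfun δ (‖v‖^2) with ha
      set b := mfun δ (‖w‖^2) with hb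
      have hga : ‖v‖ * a = gfun δ ‖v‖ := mfun_mul_self hδ hvn
      have hgb : ‖w‖ * b = gfun δ ‖w‖ := mfun_mul_self hδ hwn
      have hanneg : 0 ≤ a := mfun_nonneg _
      have hbnneg : 0 ≤ b := mfun_nonneg _
      rw [← Real.sqrt_sq (norm_nonneg (a • v - b • w)), ← Real.sqrt_sq (norm_nonneg (v - w))]
      apply Real.sqrt_le_sqrt
      have e1 : ‖a • v - b • w‖^2 = a^2*‖v‖^2 - 2*(a*b)*(inner ℝ v w : ℝ) + b^2*‖w‖^2 := by
        rw [norm_sub_sq_real, norm_smul, norm_smul, real_inner_smul_left, real_inner_smul_right]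
        rw [Real.norm_eq_abs, Real.norm_eq_abs, abs_of_nonneg hanneg, abs_of_nonneg hbnneg]
        ring
      have e2 : ‖v - w‖^2 = ‖v‖^2 - 2*(inner ℝ v w : ℝ) + ‖w‖^2 := by
        rw [norm_sub_sq_real]
      rw [e1, e2]
      have hcs : (inner ℝ v w : ℝ) ≤ ‖v‖ * ‖w‖ := real_inner_le_norm v w
      have hgprod : gfun δ ‖v‖ * gfun δ ‖w‖ ≤ ‖v‖ * ‖w‖ :=
        mul_le_mul (gfun_le _) (gfun_le _) (gfun_nonneg (norm_nonneg w)) (norm_nonneg v)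
      have hlip : |gfun δ ‖v‖ - gfun δ ‖w‖| ≤ |‖v‖ - ‖w‖| := gfun_lipschitz _ _
      have hlip2 : (gfun δ ‖v‖ - gfun δ ‖w‖)^2 ≤ (‖v‖ - ‖w‖)^2 := by
        have := sq_abs (gfun δ ‖v‖ - gfun δ ‖w‖)
        have := sq_abs (‖v‖ - ‖w‖)
        nlinarith [abs_nonneg (gfun δ ‖v‖ - gfun δ ‖w‖), abs_nonneg (‖v‖ - ‖w‖)]
      -- key: a^2 ‖v‖^2 = (gfun ‖v‖)^2 etc.
      have ha2 : a^2 * ‖v‖^2 = (gfun δ ‖v‖)^2 := by rw [← hga]; ring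
      have hb2 : b^2 * ‖w‖^2 = (gfun δ ‖w‖)^2 := by rw [← hgb]; ring
      have hab : a * b * (‖v‖ * ‖w‖) = gfun δ ‖v‖ * gfun δ ‖w‖ := by
        rw [← hga, ← hgb]; ring
      -- inequality: 2 * inner * (1 - a*b) ≤ stuff. Multiply things out.
      -- Goal: a^2‖v‖^2 - 2ab⟪v,w⟫ + b^2‖w‖^2 ≤ ‖v‖^2 - 2⟪v,w⟫ + ‖w‖^2
      -- i.e. 2⟪v,w⟫(1 - ab) ≤ ‖v‖^2 + ‖w‖^2 - g1^2 - g2^2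
      have hab1 : a * b ≤ 1 := by
        have h1 : gfun δ ‖v‖ ≤ ‖v‖ := gfun_le _
        have h2 : gfun δ ‖w‖ ≤ ‖w‖ := gfun_le _
        nlinarith [mul_pos hvn hwn, hgprod, hab]
      nlinarith [hcs, hgprod, hlip2, ha2, hb2, hab, hab1,
        mul_le_mul_of_nonneg_left hcs (mul_nonneg hanneg hbnneg)]

lemma gfun_le_half' (hδ : 0 < δ) {d : ℕ} {v : EuclideanSpace ℝ (Fin d)} :
    mfun δ (‖v‖^2) * ‖v‖ ≤ δ/2 := by
  rcases eq_or_lt_of_le (norm_nonneg v) with h0 | h0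
  · rw [← h0, mul_zero]
    linarith
  · rw [mul_comm, mfun_mul_self hδ h0]
    exact gfun_le_half hδ _



def Wv (z' : Fin d → ℝ) (x : E) : E := WithLp.toLp 2 (fun k => max (x k - z' k) 0)

def ufun (z' : Fin d → ℝ) (x : E) : ℝ := ∑ k, (max (x k - z' k) 0)^2

def hfun (δ : ℝ) (z' : Fin d → ℝ) (x : E) : ℝ := Gfun δ (ufun z' x)

lemma ufun_nonneg (z' : Fin d → ℝ) (x : E) : 0 ≤ ufun z' x :=
  Finset.sum_nonneg fun k _ => sq_nonneg _

lemma ufun_eq_normsq (z' : Fin d → ℝ) (x : E) : ufun z' x = ‖Wv z' x‖^2 := by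
  rw [EuclideanSpace.norm_eq, Real.sq_sqrt (Finset.sum_nonneg fun k _ => sq_nonneg _)]
  unfold ufun Wv
  congr 1
  ext k
  rw [Real.norm_eq_abs, sq_abs]

lemma Wv_lipschitz (z' : Fin d → ℝ) (x y : E) : ‖Wv z' x - Wv z' y‖ ≤ ‖x - y‖ := by
  rw [EuclideanSpace.norm_eq, EuclideanSpace.norm_eq]
  apply Real.sqrt_le_sqrt
  apply Finset.sum_le_sum
  intro k _
  have h1 : (Wv z' x - Wv z' y) k = max (x k - z' k) 0 - max (y k - z' k) 0 := rfl
  have h2 : (x - y) k = x k - y k := rfl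
  rw [h1, h2, Real.norm_eq_abs, Real.norm_eq_abs, sq_abs, sq_abs]
  have h3 : |max (x k - z' k) 0 - max (y k - z' k) 0| ≤ |(x k - z' k) - (y k - z' k)| :=
    abs_max_sub_max_le_abs _ _ _
  have h4 : (x k - z' k) - (y k - z' k) = x k - y k := by ring
  rw [h4] at h3
  nlinarith [abs_nonneg (max (x k - z' k) 0 - max (y k - z' k) 0), abs_nonneg (x k - y k),
    sq_abs (max (x k - z' k) 0 - max (y k - z' k) 0), sq_abs (x k - y k)]

lemma abs_coord_le_norm (v : E) (j : Fin d) : |v j| ≤ ‖v‖ := by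
  rw [EuclideanSpace.norm_eq, ← Real.sqrt_sq_eq_abs]
  apply Real.sqrt_le_sqrt
  have := Finset.single_le_sum (f := fun k => ‖v k‖^2) (fun k _ => sq_nonneg _)
    (Finset.mem_univ j)
  simpa [Real.norm_eq_abs, sq_abs] using this

lemma hasDerivAt_maxsq (t : ℝ) : HasDerivAt (fun s => max s 0 ^ 2) (2 * max t 0) t := by
  rcases lt_trichotomy t 0 with h | h | h
  · have hev : (fun s => max s 0 ^ 2) =ᶠ[nhds t] (fun _ => (0:ℝ)) := by
      filter_upwards [eventually_lt_nhds h] with s hs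
      rw [max_eq_right hs.le]
      norm_num
    have : HasDerivAt (fun _ : ℝ => (0:ℝ)) 0 t := hasDerivAt_const t 0
    rw [max_eq_right h.le, mul_zero]
    exact this.congr_of_eventuallyEq hev
  · subst h
    rw [hasDerivAt_iff_tendsto_slope]
    have hev : slope (fun s => max s 0 ^ 2) 0 =ᶠ[nhdsWithin 0 {(0:ℝ)}ᶜ] (fun s => max s 0) := by
      filter_upwards [self_mem_nhdsWithin] with s hs
      have hs0 : s ≠ 0 := hs
      rw [slope_def_field]
      rcases lt_or_gt_of_ne hs0 with h | h
      · rw [max_eq_right h.le]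
        simp
      · rw [max_eq_left h.le]
        field_simp
        simp only [max_self]; ring
    rw [Filter.tendsto_congr' hev]
    have : Filter.Tendsto (fun s : ℝ => max s 0) (nhds 0) (nhds (max 0 0)) :=
      (continuous_id.max continuous_const).tendsto 0
    simp only [max_self] at this
    simpa using this.mono_left nhdsWithin_le_nhds
  · have hev : (fun s : ℝ => max s 0 ^ 2) =ᶠ[nhds t] (fun s => s ^ 2) := by
      filter_upwards [eventually_gt_nhds h] with s hs
      rw [max_eq_left hs.le]
    have h2 : HasDerivAt (fun s : ℝ => s ^ 2) (2 * t) t := by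
      simpa using hasDerivAt_pow 2 t
    rw [max_eq_left h.le]
    exact h2.congr_of_eventuallyEq hev

def Du (z' : Fin d → ℝ) (x : E) : E →L[ℝ] ℝ :=
  ∑ k, (2 * max (x k - z' k) 0) • (EuclideanSpace.proj k : E →L[ℝ] ℝ)

lemma hasFDerivAt_ufun (z' : Fin d → ℝ) (x : E) : HasFDerivAt (ufun z') (Du z' x) x := by
  unfold ufun Du
  apply HasFDerivAt.fun_sum
  intro k _
  have h1 : HasFDerivAt (fun x : E => x k - z' k) (EuclideanSpace.proj k : E →L[ℝ] ℝ) x :=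
    (EuclideanSpace.proj k : E →L[ℝ] ℝ).hasFDerivAt.sub_const _
  exact (hasDerivAt_maxsq (x k - z' k)).comp_hasFDerivAt x h1

lemma Du_apply_single (z' : Fin d → ℝ) (x : E) (j : Fin d) :
    Du z' x (EuclideanSpace.single j 1) = 2 * max (x j - z' j) 0 := by
  unfold Du
  rw [ContinuousLinearMap.sum_apply]
  rw [Finset.sum_eq_single j]
  · simp [PiLp.proj_apply, EuclideanSpace.single_apply]
  · intro k _ hk
    simp [PiLp.proj_apply, EuclideanSpace.single_apply, hk]
  · intro h
    exact absurd (Finset.mem_univ j) h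

lemma hasFDerivAt_hfun (hδ : 0 < δ) (z' : Fin d → ℝ) (x : E) :
    HasFDerivAt (hfun δ z')
      ((-(2/δ^2) * mfun δ (ufun z' x)) • Du z' x) x :=
  (Gfun_hasDerivAt hδ (ufun z' x)).comp_hasFDerivAt x (hasFDerivAt_ufun z' x)

lemma fderiv_hfun_single (hδ : 0 < δ) (z' : Fin d → ℝ) (x : E) (j : Fin d) :
    fderiv ℝ (hfun δ z') x (EuclideanSpace.single j 1) =
      -(4/δ^2) * (mfun δ (ufun z' x) * max (x j - z' j) 0) := by
  rw [(hasFDerivAt_hfun hδ z' x).fderiv]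
  rw [ContinuousLinearMap.smul_apply, Du_apply_single]
  simp only [smul_eq_mul]
  ring

lemma ufun_continuous (z' : Fin d → ℝ) : Continuous (ufun z') := by
  unfold ufun
  apply continuous_finset_sum
  intro k _
  have : Continuous fun x : E => x k - z' k :=
    (EuclideanSpace.proj k : E →L[ℝ] ℝ).continuous.sub continuous_const
  exact ((this.max continuous_const).pow 2)

lemma contDiff_hfun (hδ : 0 < δ) (z' : Fin d → ℝ) : ContDiff ℝ 1 (hfun δ z') := by
  rw [contDiff_one_iff_fderiv]
  constructor
  · intro x
    exact (hasFDerivAt_hfun hδ z' x).differentiableAt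
  · have heq : (fderiv ℝ (hfun δ z')) =
        fun x => (-(2/δ^2) * mfun δ (ufun z' x)) • Du z' x := by
      funext x
      exact (hasFDerivAt_hfun hδ z' x).fderiv
    rw [heq]
    apply Continuous.fun_smul
    · exact continuous_const.mul ((mfun_cont hδ).comp (ufun_continuous z'))
    · unfold Du
      apply continuous_finset_sum
      intro k _
      have : Continuous fun x : E => 2 * max (x k - z' k) 0 :=
        continuous_const.mul (((EuclideanSpace.proj k : E →L[ℝ] ℝ).continuous.sub
          continuous_const).max continuous_const)
      exact this.smul continuous_const

lemma hfun_eq_one (hδ : 0 < δ) (z' : Fin d → ℝ) {x : E} (hx : ∀ k, x k ≤ z' k) :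
    hfun δ z' x = 1 := by
  unfold hfun
  have : ufun z' x = 0 := by
    unfold ufun
    apply Finset.sum_eq_zero
    intro k _
    rw [max_eq_right (by linarith [hx k])]
    norm_num
  rw [this, Gfun_zero hδ]

lemma hfun_eq_zero (hδ : 0 < δ) (z' : Fin d → ℝ) {x : E} (hx : ¬ ∀ k, x k ≤ z' k + δ) :
    hfun δ z' x = 0 := by
  push_neg at hx
  obtain ⟨j, hj⟩ := hx
  apply Gfun_of_ge hδ
  have h1 : δ ≤ max (x j - z' j) 0 := le_max_of_le_left (by linarith)
  have h2 : δ^2 ≤ (max (x j - z' j) 0)^2 := by nlinarith [le_trans hδ.le h1]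
  calc δ^2 ≤ (max (x j - z' j) 0)^2 := h2
    _ ≤ ufun z' x := Finset.single_le_sum (f := fun k => (max (x k - z' k) 0)^2)
        (fun k _ => sq_nonneg _) (Finset.mem_univ j)

lemma hfun_nonneg (hδ : 0 < δ) (z' : Fin d → ℝ) (x : E) : 0 ≤ hfun δ z' x :=
  Gfun_nonneg hδ (ufun_nonneg z' x)

lemma hfun_le_one (hδ : 0 < δ) (z' : Fin d → ℝ) (x : E) : hfun δ z' x ≤ 1 :=
  Gfun_le_one hδ (ufun_nonneg z' x)

-- derivative bound
lemma fderiv_hfun_bound (hδ : 0 < δ) (z' : Fin d → ℝ) (x : E) (j : Fin d) :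
    |fderiv ℝ (hfun δ z') x (EuclideanSpace.single j 1)| ≤ 2/δ := by
  rw [fderiv_hfun_single hδ z' x j]
  rw [abs_mul, abs_mul]
  have h0 : 0 ≤ mfun δ (ufun z' x) := mfun_nonneg _
  have h1 : |mfun δ (ufun z' x)| = mfun δ (ufun z' x) := abs_of_nonneg h0
  have h2 : |max (x j - z' j) 0| = max (x j - z' j) 0 := abs_of_nonneg (le_max_right _ _)
  have h3 : max (x j - z' j) 0 ≤ ‖Wv z' x‖ := by
    have := abs_coord_le_norm (Wv z' x) j
    have hW : (Wv z' x) j = max (x j - z' j) 0 := rfl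
    rw [hW] at this
    rwa [abs_of_nonneg (le_max_right _ _)] at this
  have h4 : mfun δ (ufun z' x) * max (x j - z' j) 0 ≤ δ/2 := by
    calc mfun δ (ufun z' x) * max (x j - z' j) 0
        ≤ mfun δ (ufun z' x) * ‖Wv z' x‖ := by
          apply mul_le_mul_of_nonneg_left h3 h0
      _ = mfun δ (‖Wv z' x‖^2) * ‖Wv z' x‖ := by rw [← ufun_eq_normsq]
      _ ≤ δ/2 := gfun_le_half' hδ
  have h5 : |(-(4/δ^2))| = 4/δ^2 := by
    rw [abs_neg, abs_of_nonneg (by positivity)]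
  rw [h5, h1, h2]
  calc 4/δ^2 * (mfun δ (ufun z' x) * max (x j - z' j) 0) ≤ 4/δ^2 * (δ/2) := by
        apply mul_le_mul_of_nonneg_left h4 (by positivity)
    _ = 2/δ := by field_simp; ring

-- Lipschitz bound for partial derivatives
lemma fderiv_hfun_lip (hδ : 0 < δ) (z' : Fin d → ℝ) (x y : E) (j : Fin d) :
    |fderiv ℝ (hfun δ z') x (EuclideanSpace.single j 1) -
      fderiv ℝ (hfun δ z') y (EuclideanSpace.single j 1)| ≤ (4/δ^2) * ‖x - y‖ := by
  rw [fderiv_hfun_single hδ z' x j, fderiv_hfun_single hδ z' y j]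
  set Fx : E := mfun δ (‖Wv z' x‖^2) • Wv z' x with hFx
  set Fy : E := mfun δ (‖Wv z' y‖^2) • Wv z' y with hFy
  have hx : mfun δ (ufun z' x) * max (x j - z' j) 0 = Fx j := by
    rw [hFx, ufun_eq_normsq]
    have : (mfun δ (‖Wv z' x‖^2) • Wv z' x) j = mfun δ (‖Wv z' x‖^2) * (Wv z' x) j := rfl
    rw [this]
    rfl
  have hy : mfun δ (ufun z' y) * max (y j - z' j) 0 = Fy j := by
    rw [hFy, ufun_eq_normsq]
    have : (mfun δ (‖Wv z' y‖^2) • Wv z' y) j = mfun δ (‖Wv z' y‖^2) * (Wv z' y) j := rfl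
    rw [this]
    rfl
  rw [hx, hy]
  have h1 : -(4/δ^2) * Fx j - -(4/δ^2) * Fy j = -(4/δ^2) * (Fx j - Fy j) := by ring
  rw [h1, abs_mul]
  have h2 : |(-(4/δ^2))| = 4/δ^2 := by rw [abs_neg, abs_of_nonneg (by positivity)]
  rw [h2]
  apply mul_le_mul_of_nonneg_left _ (by positivity)
  have h3 : |Fx j - Fy j| = |(Fx - Fy) j| := by
    congr 1
  calc |Fx j - Fy j| = |(Fx - Fy) j| := h3
    _ ≤ ‖Fx - Fy‖ := abs_coord_le_norm _ _
    _ ≤ ‖Wv z' x - Wv z' y‖ := radial_lipschitz hδ _ _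
    _ ≤ ‖x - y‖ := Wv_lipschitz z' x y



lemma memH₂_scaled (hδ : 0 < δ) (z' : Fin d → ℝ) :
    memH₂ (fun x => (1 + 4/δ^2)⁻¹ * hfun δ z' x) := by
  set M : ℝ := 1 + 4/δ^2 with hM
  have hM1 : (1:ℝ) ≤ M := by
    rw [hM]
    have : 0 ≤ 4/δ^2 := by positivity
    linarith
  have hMpos : 0 < M := lt_of_lt_of_le one_pos hM1
  have hfd : ∀ x : E, fderiv ℝ (fun x => M⁻¹ * hfun δ z' x) x =
      M⁻¹ • fderiv ℝ (hfun δ z') x := by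
    intro x
    exact fderiv_const_mul ((contDiff_hfun hδ z').differentiable one_ne_zero x) M⁻¹
  refine ⟨?_, ?_, ?_, ?_⟩
  · exact ContDiff.mul contDiff_const (contDiff_hfun hδ z')
  · intro x
    rw [abs_mul, abs_of_nonneg (by positivity : (0:ℝ) ≤ M⁻¹)]
    have h1 : |hfun δ z' x| ≤ 1 := by
      rw [abs_of_nonneg (hfun_nonneg hδ z' x)]
      exact hfun_le_one hδ z' x
    calc M⁻¹ * |hfun δ z' x| ≤ M⁻¹ * 1 := by
          apply mul_le_mul_of_nonneg_left h1 (by positivity)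
      _ ≤ 1 := by
          rw [mul_one]
          exact inv_le_one_of_one_le₀ hM1
  · intro j x
    rw [hfd x, ContinuousLinearMap.smul_apply, smul_eq_mul, abs_mul,
      abs_of_nonneg (by positivity : (0:ℝ) ≤ M⁻¹)]
    have h1 := fderiv_hfun_bound hδ z' x j
    have h2 : 2/δ ≤ M := by
      rw [hM, div_le_iff₀ hδ]
      have h3 : (1 + 4/δ^2) * δ = (δ^2 + 4)/δ := by
        field_simp
      rw [h3, le_div_iff₀ hδ]
      nlinarith [sq_nonneg (δ-1)]
    calc M⁻¹ * |fderiv ℝ (hfun δ z') x (EuclideanSpace.single j 1)| ≤ M⁻¹ * (2/δ) := by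
          apply mul_le_mul_of_nonneg_left h1 (by positivity)
      _ ≤ M⁻¹ * M := by
          apply mul_le_mul_of_nonneg_left h2 (by positivity)
      _ = 1 := inv_mul_cancel₀ (ne_of_gt hMpos)
  · intro j x y
    rw [hfd x, hfd y, ContinuousLinearMap.smul_apply, ContinuousLinearMap.smul_apply,
      smul_eq_mul, smul_eq_mul, ← mul_sub, abs_mul,
      abs_of_nonneg (by positivity : (0:ℝ) ≤ M⁻¹)]
    have h1 := fderiv_hfun_lip hδ z' x y j
    have h2 : 4/δ^2 ≤ M := by rw [hM]; linarith
    calc M⁻¹ * |fderiv ℝ (hfun δ z') x (EuclideanSpace.single j 1) -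
          fderiv ℝ (hfun δ z') y (EuclideanSpace.single j 1)|
        ≤ M⁻¹ * ((4/δ^2) * ‖x - y‖) := by
          apply mul_le_mul_of_nonneg_left h1 (by positivity)
      _ ≤ M⁻¹ * (M * ‖x - y‖) := by
          apply mul_le_mul_of_nonneg_left
            (mul_le_mul_of_nonneg_right h2 (norm_nonneg _)) (by positivity)
      _ = ‖x - y‖ := by
          rw [← mul_assoc, inv_mul_cancel₀ (ne_of_gt hMpos), one_mul]



variable {Ω : Type*} [MeasureSpace Ω] [IsProbabilityMeasure (ℙ : Measure Ω)]

lemma dH₂_comm (F N : Ω → E) : dH₂ F N = dH₂ N F := by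
  unfold dH₂
  congr 1
  ext r
  constructor
  · rintro ⟨h, hh, rfl⟩
    exact ⟨h, hh, abs_sub_comm _ _⟩
  · rintro ⟨h, hh, rfl⟩
    exact ⟨h, hh, abs_sub_comm _ _⟩

lemma abs_integral_sub_le_dH₂ (F N : Ω → E) {h : E → ℝ} (hh : memH₂ h) :
    |(∫ ω, h (F ω)) - ∫ ω, h (N ω)| ≤ dH₂ F N := by
  apply le_csSup
  · refine ⟨2, ?_⟩
    rintro r ⟨g, hg, rfl⟩
    have hb : ∀ (X : Ω → E), ‖∫ ω, g (X ω)‖ ≤ 1 := by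
      intro X
      have h1 : ‖∫ ω, g (X ω)‖ ≤ 1 * (ℙ (Set.univ : Set Ω)).toReal := by
        apply MeasureTheory.norm_integral_le_of_norm_le_const
        exact Filter.Eventually.of_forall fun ω => by
          rw [Real.norm_eq_abs]; exact hg.2.1 _
      simpa using h1
    calc |(∫ ω, g (F ω)) - ∫ ω, g (N ω)| ≤ ‖∫ ω, g (F ω)‖ + ‖∫ ω, g (N ω)‖ := by
          rw [Real.norm_eq_abs, Real.norm_eq_abs]
          exact abs_sub _ _
      _ ≤ 2 := by linarith [hb F, hb N]
  · exact ⟨h, hh, rfl⟩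

lemma measurable_orthant {F : Ω → E} (hF : Measurable F) (z : Fin d → ℝ) :
    MeasurableSet {ω | ∀ k, F ω k ≤ z k} := by
  have : {ω | ∀ k, F ω k ≤ z k} = ⋂ k, {ω | F ω k ≤ z k} := by
    ext ω; simp
  rw [this]
  apply MeasurableSet.iInter
  intro k
  exact measurableSet_le ((measurable_pi_apply k).comp (by fun_prop : Measurable fun ω => (F ω).ofLp)) measurable_const

lemma one_sided (hδ : 0 < δ) (F N : Ω → E) (hF : Measurable F) (hN : Measurable N)
    (z' : Fin d → ℝ) :
    (ℙ {ω | ∀ k, F ω k ≤ z' k}).toReal ≤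
      (ℙ {ω | ∀ k, N ω k ≤ z' k + δ}).toReal + (1 + 4/δ^2) * dH₂ F N := by
  set M : ℝ := 1 + 4/δ^2 with hM
  have hMpos : 0 < M := by rw [hM]; positivity
  set h : E → ℝ := hfun δ z' with hh
  have hcont : Continuous h := (contDiff_hfun hδ z').continuous
  have int_of : ∀ (X : Ω → E), Measurable X → Integrable (fun ω => h (X ω)) ℙ := by
    intro X hX
    apply Integrable.mono' (integrable_const (1:ℝ))
    · exact (hcont.measurable.comp hX).aestronglyMeasurable
    · exact Filter.Eventually.of_forall fun ω => by
        rw [Real.norm_eq_abs, abs_of_nonneg (hfun_nonneg hδ z' _)]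
        exact hfun_le_one hδ z' _
  have intF := int_of F hF
  have intN := int_of N hN
  have measA := measurable_orthant hF z'
  have measB := measurable_orthant hN (fun k => z' k + δ)
  -- step 1: P(A) ≤ ∫ h(F)
  have step1 : (ℙ {ω | ∀ k, F ω k ≤ z' k}).toReal ≤ ∫ ω, h (F ω) := by
    rw [← measureReal_def, ← integral_indicator_one measA]
    apply integral_mono ((integrable_const (1:ℝ)).indicator measA) intF
    intro ω
    rw [Set.indicator_apply]
    split
    · rename_i hω
      show (1:ℝ) ≤ h (F ω)
      rw [hh, hfun_eq_one hδ z' hω]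
    · exact hfun_nonneg hδ z' _
  -- step 2: ∫ h(N) ≤ P(B)
  have step2 : (∫ ω, h (N ω)) ≤ (ℙ {ω | ∀ k, N ω k ≤ z' k + δ}).toReal := by
    rw [← measureReal_def, ← integral_indicator_one measB]
    apply integral_mono intN ((integrable_const (1:ℝ)).indicator measB)
    intro ω
    rw [Set.indicator_apply]
    split
    · rename_i hω
      exact hfun_le_one hδ z' _
    · rename_i hω
      show h (N ω) ≤ (0:ℝ)
      rw [hh, hfun_eq_zero hδ z' hω]
  -- step 3: ∫ h(F) - ∫ h(N) ≤ M * dH₂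
  have step3 : (∫ ω, h (F ω)) - ∫ ω, h (N ω) ≤ M * dH₂ F N := by
    have h1 := abs_integral_sub_le_dH₂ F N (memH₂_scaled hδ z')
    rw [MeasureTheory.integral_const_mul, MeasureTheory.integral_const_mul] at h1
    have h2 : M⁻¹ * (∫ ω, h (F ω)) - M⁻¹ * ∫ ω, h (N ω) ≤ dH₂ F N :=
      le_trans (le_abs_self _) h1
    have h3 := mul_le_mul_of_nonneg_left h2 hMpos.le
    calc (∫ ω, h (F ω)) - ∫ ω, h (N ω)
        = M * (M⁻¹ * (∫ ω, h (F ω)) - M⁻¹ * ∫ ω, h (N ω)) := by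
          field_simp
      _ ≤ M * dH₂ F N := h3
  linarith


end S16
end
/-- From the proof of Corollary 2 of the paper: if the law of `N` satisfies an
anti-concentration inequality with constant `c` on lower-left orthants, then for every
`δ > 0` the Kolmogorov distance between `F` and `N` is bounded by
`(1 + 4/δ²) d_{H₂}(F, N) + cδ`. -/
theorem stmt16 {Ω : Type*} [MeasureSpace Ω] [IsProbabilityMeasure (ℙ : Measure Ω)]
    (d : ℕ) (hd : 1 ≤ d) (F N : Ω → EuclideanSpace ℝ (Fin d))
    (hF : Measurable F) (hN : Measurable N) (c : ℝ) (hc : 0 < c)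
    (hanti : ∀ (z : Fin d → ℝ) (δ : ℝ), 0 < δ →
      (ℙ {ω | ∀ k : Fin d, N ω k ≤ z k + δ}).toReal -
        (ℙ {ω | ∀ k : Fin d, N ω k ≤ z k}).toReal ≤ c * δ) :
    ∀ δ : ℝ, 0 < δ → ∀ z : Fin d → ℝ,
      |(ℙ {ω | ∀ k : Fin d, F ω k ≤ z k}).toReal -
        (ℙ {ω | ∀ k : Fin d, N ω k ≤ z k}).toReal| ≤
      (1 + 4 / δ ^ 2) * dH₂ F N + c * δ := by
  intro δ hδ z
  have key1 := S16.one_sided hδ F N hF hN z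
  have hanti1 := hanti z δ hδ
  have key2 := S16.one_sided hδ N F hN hF (fun k => z k - δ)
  have hanti2 := hanti (fun k => z k - δ) δ hδ
  rw [S16.dH₂_comm N F] at key2
  have hsetF : {ω | ∀ k : Fin d, F ω k ≤ (fun k => z k - δ) k + δ} =
      {ω | ∀ k : Fin d, F ω k ≤ z k} := by
    ext ω
    simp only [Set.mem_setOf_eq]
    constructor <;> intro h k <;> have := h k <;> linarith
  have hsetN : {ω | ∀ k : Fin d, N ω k ≤ (fun k => z k - δ) k + δ} =
      {ω | ∀ k : Fin d, N ω k ≤ z k} := by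
    ext ω
    simp only [Set.mem_setOf_eq]
    constructor <;> intro h k <;> have := h k <;> linarith
  rw [hsetF] at key2
  rw [hsetN] at hanti2
  -- key2 : P(N ≤ z - δ) ≤ P(F ≤ z) + M dH₂
  -- hanti2 : P(N ≤ z) - P(N ≤ z - δ) ≤ cδ
  rw [abs_sub_le_iff]
  constructor
  · linarith
  · linarith
end
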